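/- arXiv:math/9804063 — 2 statements merged into one kernel-verified Lean document; each statement's English description precedes it below -/
import Mathlib

section
/- Let ℒ be a family of finite subsets of ℕ such that ℒ_* and (ℒ(n))_* are pointwise closed for every n ∈ ℕ, and let M be an infinite subset of ℕ. If ξ = sup{ s_L((ℒ(n))_*) : n ∈ ℕ and L an infinite subset of M }, then (ℒ_*)^ξ_M ⊆ {∅}, and therefore s_M(ℒ_*) ≤ ξ + 1. -/
open Ordinal Filter Set

/-- `FinLT s t` : every element of `s` is smaller than every element of `t`
(i.e. `max s < min t`, vacuously true if one of them is empty). -/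
def FinLT (s t : Finset ℕ) : Prop := ∀ a ∈ s, ∀ b ∈ t, a < b

/-- `s` is an initial segment of `t`  (`s ⪯ t`). -/
def InitSeg (s t : Finset ℕ) : Prop :=
  s ⊆ t ∧ ∀ a ∈ t, ∀ b ∈ s, a ≤ b → a ∈ s

/-- `s` is a proper initial segment of `t`  (`s ≺ t`). -/
def PInitSeg (s t : Finset ℕ) : Prop := InitSeg s t ∧ s ≠ t

/-- `[M]^{<ω}` : the finite subsets of `M`. -/
def FinSubs (M : Set ℕ) : Set (Finset ℕ) := {s | ↑s ⊆ M}

/-- `ℒ(m) = {s : {m} ∪ s ∈ ℒ and {m} < s}`. -/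
def famAt (L : Set (Finset ℕ)) (m : ℕ) : Set (Finset ℕ) :=
  {s | insert m s ∈ L ∧ ∀ a ∈ s, m < a}

/-- `ℒ*` : the family of initial segments of elements of `ℒ`. -/
def famStar (L : Set (Finset ℕ)) : Set (Finset ℕ) := {t | ∃ s ∈ L, InitSeg t s}

/-- `ℒ_*` : the family of subsets of elements of `ℒ`. -/
def famSub (L : Set (Finset ℕ)) : Set (Finset ℕ) := {t | ∃ s ∈ L, t ⊆ s}

/-- A family is Sperner if no element is a proper subset of another. -/
def Sperner (L : Set (Finset ℕ)) : Prop := ¬ ∃ s ∈ L, ∃ t ∈ L, s ⊂ t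

/-- A family is hereditary if it is closed under taking subsets. -/
def Hereditary (F : Set (Finset ℕ)) : Prop := ∀ s ∈ F, ∀ t ⊆ s, t ∈ F

/-- `IsUniform ξ ℒ M` : `ℒ` is a `ξ`-uniform family on `M`. -/
inductive IsUniform : Ordinal.{0} → Set (Finset ℕ) → Set ℕ → Prop
  | zero (M : Set ℕ) : IsUniform 0 {(∅ : Finset ℕ)} M
  | succ (ζ : Ordinal.{0}) (L : Set (Finset ℕ)) (M : Set ℕ)
      (hsub : L ⊆ FinSubs M) (hne : (∅ : Finset ℕ) ∉ L)
      (h : ∀ m ∈ M, IsUniform ζ (famAt L m) (M ∩ Set.Ioi m)) :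
      IsUniform (ζ + 1) L M
  | limit (ξ : Ordinal.{0}) (L : Set (Finset ℕ)) (M : Set ℕ)
      (hlim : Order.IsSuccLimit ξ)
      (hsub : L ⊆ FinSubs M) (hne : (∅ : Finset ℕ) ∉ L)
      (ξm : ℕ → Ordinal.{0})
      (hmono : ∀ m ∈ M, ∀ n ∈ M, m < n → ξm m < ξm n)
      (hlt : ∀ m ∈ M, ξm m < ξ)
      (hsup : ∀ β < ξ, ∃ m ∈ M, β ≤ ξm m)
      (h : ∀ m ∈ M, IsUniform (ξm m) (famAt L m) (M ∩ Set.Ioi m)) :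
      IsUniform ξ L M

/-- The characteristic function of a finite set, as an element of the
product space `ℕ → Bool` (i.e. `2^ℕ`). -/
def toChar (s : Finset ℕ) : ℕ → Bool := fun n => decide (n ∈ s)

/-- A family of finite subsets of `ℕ` is pointwise closed if its image in `2^ℕ`
(under characteristic functions) is closed in the product topology. -/
def PtwiseClosed (F : Set (Finset ℕ)) : Prop := IsClosed (toChar '' F)

/-- The first strong Cantor--Bendixson derivative of `F` on `M`:
the set of `A ∈ F ∩ [M]^{<ω}` such that `A` is a cluster point (in `2^ℕ`) of
`{B ∈ F : B ⊆ A ∪ L}` for every infinite `L ⊆ M`. -/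
def derivOne (M : Set ℕ) (F : Set (Finset ℕ)) : Set (Finset ℕ) :=
  {A | A ∈ F ∧ ↑A ⊆ M ∧ ∀ L : Set ℕ, L ⊆ M → L.Infinite →
    AccPt (toChar A) (𝓟 (toChar '' {B | B ∈ F ∧ ↑B ⊆ ↑A ∪ L}))}

/-- The iterated strong Cantor--Bendixson derivatives `(F)^ξ_M`. -/
noncomputable def CBDeriv (F : Set (Finset ℕ)) (M : Set ℕ) (o : Ordinal.{0}) :
    Set (Finset ℕ) :=
  Ordinal.limitRecOn o F (fun _ ih => derivOne M ih)
    (fun o _ ih => ⋂ (β : Ordinal.{0}) (h : β < o), ih β h)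

/-- The strong Cantor--Bendixson index `s_M(F)` : the least ordinal `ξ`
with `(F)^ξ_M = ∅`. -/
noncomputable def CBIndex (F : Set (Finset ℕ)) (M : Set ℕ) : Ordinal.{0} :=
  sInf {o : Ordinal.{0} | CBDeriv F M o = ∅}

open Topology

theorem toChar_injective : Function.Injective toChar := by
  intro s t h
  ext n
  have := congrFun h n
  simpa [toChar, decide_eq_decide] using this

theorem CBDeriv_zero (F : Set (Finset ℕ)) (M : Set ℕ) : CBDeriv F M 0 = F :=
  Ordinal.limitRecOn_zero ..

theorem CBDeriv_succ (F : Set (Finset ℕ)) (M : Set ℕ) (o : Ordinal.{0}) :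
    CBDeriv F M (o + 1) = derivOne M (CBDeriv F M o) := by
  rw [CBDeriv, Ordinal.add_one_eq_succ, Ordinal.limitRecOn_succ]
  rfl

theorem CBDeriv_limit (F : Set (Finset ℕ)) (M : Set ℕ) (o : Ordinal.{0}) (ho : Order.IsSuccLimit o) :
    CBDeriv F M o = ⋂ (β : Ordinal.{0}) (_ : β < o), CBDeriv F M β := by
  rw [CBDeriv, Ordinal.limitRecOn_limit _ _ _ _ ho]
  rfl

theorem derivOne_subset (M : Set ℕ) (F : Set (Finset ℕ)) : derivOne M F ⊆ F :=
  fun _ h => h.1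

theorem CBDeriv_anti (F : Set (Finset ℕ)) (M : Set ℕ) :
    ∀ {o₂ o₁ : Ordinal.{0}}, o₁ ≤ o₂ → CBDeriv F M o₂ ⊆ CBDeriv F M o₁ := by
  intro o₂
  induction o₂ using Ordinal.induction with
  | h o₂ ih =>
    intro o₁ h
    rcases eq_or_lt_of_le h with rfl | hlt
    · exact fun _ h => h
    rcases Ordinal.zero_or_succ_or_isSuccLimit o₂ with rfl | ⟨a, rfl⟩ | hl
    · exact absurd hlt (not_lt_zero : ¬ o₁ < 0)
    · rw [← Ordinal.add_one_eq_succ, CBDeriv_succ]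
      exact fun x hx => ih a (Order.lt_succ a) (Order.lt_succ_iff.mp hlt) (hx.1)
    · rw [CBDeriv_limit F M o₂ hl]
      exact Set.iInter₂_subset o₁ hlt

theorem cylinder_mem_nhds (x : ℕ → Bool) (N : ℕ) :
    {g : ℕ → Bool | ∀ i ≤ N, g i = x i} ∈ 𝓝 x := by
  have hop : IsOpen {g : ℕ → Bool | ∀ i ≤ N, g i = x i} := by
    have he : {g : ℕ → Bool | ∀ i ≤ N, g i = x i} =
        ⋂ i ∈ Finset.Iic N, (fun g : ℕ → Bool => g i) ⁻¹' {x i} := by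
      ext g; simp [Finset.mem_Iic]
    rw [he]
    exact isOpen_biInter_finset fun i _ =>
      (continuous_apply i).isOpen_preimage _ (isOpen_discrete _)
  exact hop.mem_nhds (fun i _ => rfl)

theorem derivOne_char {M : Set ℕ} {F : Set (Finset ℕ)} (hF : Hereditary F) (A : Finset ℕ) :
    A ∈ derivOne M F ↔ A ∈ F ∧ ↑A ⊆ M ∧ {b ∈ M | insert b A ∉ F}.Finite := by
  constructor
  · rintro ⟨h1, h2, h3⟩
    refine ⟨h1, h2, ?_⟩
    by_contra hinf
    have hinf2 : {b ∈ M | insert b A ∉ F}.Infinite := hinf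
    have hLinf : ({b ∈ M | insert b A ∉ F} \ Set.Iic (A.sup id)).Infinite :=
      hinf2.diff (Set.finite_Iic _)
    have hLM : {b ∈ M | insert b A ∉ F} \ Set.Iic (A.sup id) ⊆ M := fun b hb => hb.1.1
    have hacc := h3 _ hLM hLinf
    rw [accPt_iff_nhds] at hacc
    obtain ⟨y, ⟨hyU, B, ⟨hBF, hBsub⟩, rfl⟩, hyne⟩ :=
      hacc _ (cylinder_mem_nhds (toChar A) (A.sup id))
    have hAB : A ⊆ B := by
      intro a ha
      have := hyU a (Finset.le_sup (f := id) ha)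
      simp only [toChar, decide_eq_decide] at this
      exact this.mpr ha
    have hne : B ≠ A := fun h => hyne (by rw [h])
    obtain ⟨b, hbB, hbA⟩ :=
      Finset.exists_of_ssubset (hAB.ssubset_of_ne (Ne.symm hne))
    have hbL : b ∈ {b ∈ M | insert b A ∉ F} \ Set.Iic (A.sup id) := by
      rcases hBsub hbB with h | h
      · exact absurd h hbA
      · exact h
    exact hbL.1.2 (hF B hBF _ (Finset.insert_subset hbB hAB))
  · rintro ⟨h1, h2, h3⟩
    refine ⟨h1, h2, fun L hLM hLinf => ?_⟩
    rw [accPt_iff_nhds]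
    intro U hU
    rw [nhds_pi, Filter.mem_pi] at hU
    obtain ⟨I, hIfin, V, hV, hVsub⟩ := hU
    obtain ⟨N, hN⟩ := hIfin.bddAbove
    obtain ⟨b, hbL, hbno⟩ :=
      (hLinf.diff ((h3.union (Set.finite_Iic (max N (A.sup id)))))).nonempty
    have hbM : b ∈ M := hLM hbL
    have hbig : max N (A.sup id) < b := by
      by_contra h
      exact hbno (Or.inr (le_of_not_gt h))
    have hbF : insert b A ∈ F := by
      by_contra h
      exact hbno (Or.inl ⟨hbM, h⟩)
    have hbA : b ∉ A := fun h =>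
      absurd (le_trans (Finset.le_sup (f := id) h) (le_max_right _ _)) (not_le_of_gt hbig)
    refine ⟨toChar (insert b A), ⟨hVsub ?_, ⟨insert b A, ⟨hbF, ?_⟩, rfl⟩⟩, ?_⟩
    · intro i hi
      have hib : i ≠ b := fun h => by
        subst h
        exact absurd (le_trans (hN hi) (le_max_left _ _)) (not_le_of_gt hbig)
      have : toChar (insert b A) i = toChar A i := by
        simp only [toChar, decide_eq_decide, Finset.mem_insert]
        exact ⟨fun h => h.resolve_left hib, Or.inr⟩
      rw [this]
      exact mem_of_mem_nhds (hV i)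
    · rw [Finset.coe_insert]
      exact Set.insert_subset (Or.inr hbL) (fun a ha => Or.inl ha)
    · intro h
      have := congrFun h b
      simp [toChar, hbA] at this

theorem hered_derivOne {M : Set ℕ} {F : Set (Finset ℕ)} (hF : Hereditary F) :
    Hereditary (derivOne M F) := by
  intro s hs t hts
  rw [derivOne_char hF] at hs ⊢
  refine ⟨hF s hs.1 t hts, Set.Subset.trans (Finset.coe_subset.mpr hts) hs.2.1, ?_⟩
  refine hs.2.2.subset ?_
  intro b hb
  exact ⟨hb.1, fun h => hb.2 (hF _ h _ (Finset.insert_subset_insert _ hts))⟩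

theorem hered_CBDeriv {F : Set (Finset ℕ)} (hF : Hereditary F) (M : Set ℕ) (o : Ordinal.{0}) :
    Hereditary (CBDeriv F M o) := by
  induction o using Ordinal.induction with
  | h o ih =>
    rcases Ordinal.zero_or_succ_or_isSuccLimit o with rfl | ⟨a, rfl⟩ | hl
    · rw [CBDeriv_zero]; exact hF
    · rw [← Ordinal.add_one_eq_succ, CBDeriv_succ]
      exact hered_derivOne (ih a (Order.lt_succ a))
    · rw [CBDeriv_limit F M o hl]
      intro s hs t hts
      rw [Set.mem_iInter₂] at hs ⊢
      exact fun β hβ => ih β hβ _ (hs β hβ) t hts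

theorem CBDeriv_succ_char {F : Set (Finset ℕ)} (hF : Hereditary F) (M : Set ℕ) (o : Ordinal.{0})
    (A : Finset ℕ) :
    A ∈ CBDeriv F M (o + 1) ↔ A ∈ CBDeriv F M o ∧ ↑A ⊆ M ∧
      {b ∈ M | insert b A ∉ CBDeriv F M o}.Finite := by
  rw [CBDeriv_succ]
  exact derivOne_char (hered_CBDeriv hF M o) A

theorem CBDeriv_restrict {F : Set (Finset ℕ)} (hF : Hereditary F) :
    ∀ (o : Ordinal.{0}) {L L' : Set ℕ} {C : Finset ℕ}, (L \ L').Finite → ↑C ⊆ L →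
      C ∈ CBDeriv F L' o → C ∈ CBDeriv F L o := by
  intro o
  induction o using Ordinal.induction with
  | h o ih =>
    intro L L' C hdiff hCL hC
    rcases Ordinal.zero_or_succ_or_isSuccLimit o with rfl | ⟨a, rfl⟩ | hl
    · rwa [CBDeriv_zero] at hC ⊢
    · rw [← Ordinal.add_one_eq_succ] at hC ⊢
      rw [CBDeriv_succ_char hF] at hC ⊢
      obtain ⟨h1, h2, h3⟩ := hC
      refine ⟨ih a (Order.lt_succ a) hdiff hCL h1, hCL, ?_⟩
      have hsub : {b ∈ L | insert b C ∉ CBDeriv F L a} ⊆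
          (L \ L') ∪ {b ∈ L' | insert b C ∉ CBDeriv F L' a} := by
        intro b hb
        by_cases hbL' : b ∈ L'
        · refine Or.inr ⟨hbL', fun h => hb.2 (ih a (Order.lt_succ a) hdiff ?_ h)⟩
          rw [Finset.coe_insert]
          exact Set.insert_subset hb.1 hCL
        · exact Or.inl ⟨hb.1, hbL'⟩
      exact (hdiff.union h3).subset hsub
    · rw [CBDeriv_limit _ _ _ hl] at hC ⊢
      rw [Set.mem_iInter₂] at hC ⊢
      exact fun β hβ => ih β hβ hdiff hCL (hC β hβ)

theorem exists_chain {α : Type*} (P : ℕ → α → Prop) (R : ℕ → α → α → Prop) (a₀ : α)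
    (h₀ : P 0 a₀) (step : ∀ k a, P k a → ∃ b, P (k+1) b ∧ R k a b) :
    ∃ f : ℕ → α, f 0 = a₀ ∧ (∀ k, P k (f k)) ∧ ∀ k, R k (f k) (f (k+1)) := by
  choose g hg1 hg2 using step
  let f : (k : ℕ) → {a // P k a} := fun k =>
    Nat.rec ⟨a₀, h₀⟩ (fun k ih => ⟨g k ih.1 ih.2, hg1 k ih.1 ih.2⟩) k
  exact ⟨fun k => (f k).1, rfl, fun k => (f k).2, fun k => hg2 k (f k).1 (f k).2⟩

theorem fixedpoint_empty {F D : Set (Finset ℕ)} {M : Set ℕ} (hclosed : PtwiseClosed F)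
    (hM : M.Infinite) (hDF : D ⊆ F)
    (hfix : ∀ A ∈ D, {b ∈ M | insert b A ∉ D}.Finite) : D = ∅ := by
  by_contra hne
  obtain ⟨A₀, hA₀⟩ := Set.nonempty_iff_ne_empty.mpr hne
  have step : ∀ (k : ℕ) (A : Finset ℕ), A ∈ D →
      ∃ B, B ∈ D ∧ ∃ b, b > k ∧ B = insert b A := by
    intro k A hA
    obtain ⟨b, hb⟩ := (hM.diff ((hfix A hA).union (Set.finite_Iic k))).nonempty
    refine ⟨insert b A, ?_, b, ?_, rfl⟩
    · by_contra h
      exact hb.2 (Or.inl ⟨hb.1, h⟩)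
    · by_contra h
      exact hb.2 (Or.inr (le_of_not_gt h))
  obtain ⟨f, hf0, hfP, hfR⟩ := exists_chain (fun _ A => A ∈ D)
    (fun k A B => ∃ b, b > k ∧ B = insert b A) A₀ hA₀ step
  choose b hbk hbeq using hfR
  have hmono : ∀ k j, k ≤ j → f k ⊆ f j := by
    intro k j hkj
    induction j, hkj using Nat.le_induction with
    | base => exact Finset.Subset.refl _
    | succ j hkj ih =>
      rw [hbeq j]
      exact ih.trans (Finset.subset_insert _ _)
  have hstab : ∀ i j, i + 1 ≤ j → toChar (f j) i = toChar (f (i+1)) i := by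
    intro i j hij
    induction j, hij using Nat.le_induction with
    | base => rfl
    | succ j hij ih =>
      rw [hbeq j, ← ih]
      have hne : i ≠ b j := by have := hbk j; omega
      simp [toChar, Finset.mem_insert, hne]
  have htend : Tendsto (fun j => toChar (f j)) atTop
      (𝓝 (fun i => toChar (f (i+1)) i)) := by
    rw [tendsto_pi_nhds]
    intro i
    have hev : (fun _ : ℕ => toChar (f (i+1)) i) =ᶠ[atTop] (fun j => toChar (f j) i) :=
      eventually_atTop.mpr ⟨i+1, fun j hj => (hstab i j hj).symm⟩
    exact Tendsto.congr' hev tendsto_const_nhds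
  have hmem : (fun i => toChar (f (i+1)) i) ∈ toChar '' F :=
    hclosed.mem_of_tendsto htend
      (Filter.Eventually.of_forall (fun j => ⟨f j, hDF (hfP j), rfl⟩))
  obtain ⟨s, _, hs⟩ := hmem
  have hbs : ∀ k, b k ∈ s := by
    intro k
    have h1 : b k ∈ f (b k + 1) := by
      have hsub : f (k+1) ⊆ f (b k + 1) := hmono _ _ (by have := hbk k; omega)
      exact hsub (by rw [hbeq k]; exact Finset.mem_insert_self _ _)
    have h2 := congrFun hs (b k)
    simp only [toChar, decide_eq_decide] at h2
    exact h2.mpr h1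
  have := hbs (s.sup id)
  have hle : b (s.sup id) ≤ s.sup id := Finset.le_sup (f := id) this
  have := hbk (s.sup id)
  omega

theorem CBDeriv_eventually_empty {F : Set (Finset ℕ)} {M : Set ℕ} (hF : Hereditary F)
    (hclosed : PtwiseClosed F) (hM : M.Infinite) : ∃ o : Ordinal.{0}, CBDeriv F M o = ∅ := by
  classical
  set D : Set (Finset ℕ) := ⋂ o : Ordinal.{0}, CBDeriv F M o with hD
  have hx : ∀ A : Finset ℕ, ∃ o : Ordinal.{0}, A ∉ D → A ∉ CBDeriv F M o := by
    intro A
    by_cases h : A ∈ D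
    · exact ⟨0, fun h' => absurd h h'⟩
    · obtain ⟨o, ho⟩ : ∃ o : Ordinal.{0}, A ∉ CBDeriv F M o := by
        by_contra hh
        push_neg at hh
        exact h (Set.mem_iInter.mpr hh)
      exact ⟨o, fun _ => ho⟩
  choose oA hoA using hx
  obtain ⟨o₀, ho₀⟩ := Ordinal.bddAbove_range.{0,0} oA
  have hDo₀ : CBDeriv F M o₀ = D := by
    apply Set.Subset.antisymm
    · intro A hA
      by_contra h
      exact (hoA A h) (CBDeriv_anti F M (ho₀ (Set.mem_range_self A)) hA)
    · exact Set.iInter_subset _ o₀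
  have hfix : ∀ A ∈ D, {b ∈ M | insert b A ∉ D}.Finite := by
    intro A hA
    have hA1 : A ∈ CBDeriv F M (o₀+1) := Set.iInter_subset _ (o₀+1) hA
    rw [CBDeriv_succ_char hF, hDo₀] at hA1
    exact hA1.2.2
  have hDF : D ⊆ F := by
    rw [← CBDeriv_zero F M]
    exact Set.iInter_subset _ 0
  exact ⟨o₀, hDo₀.trans (fixedpoint_empty hclosed hM hDF hfix)⟩

theorem CBDeriv_CBIndex_empty {F : Set (Finset ℕ)} {M : Set ℕ} (hF : Hereditary F)
    (hclosed : PtwiseClosed F) (hM : M.Infinite) : CBDeriv F M (CBIndex F M) = ∅ :=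
  csInf_mem (CBDeriv_eventually_empty hF hclosed hM)

theorem exists_cofinal_seq {F : Set (Finset ℕ)} {P : Set ℕ} (hF : Hereditary F)
    (hclosed : PtwiseClosed F) (hP : P.Infinite) {lam : Ordinal.{0}} (hlim : Order.IsSuccLimit lam)
    (hne : (CBDeriv F P lam).Nonempty) :
    ∃ γ : ℕ → Ordinal.{0}, (∀ k, γ k < lam) ∧ Monotone γ ∧ ∀ β < lam, ∃ k, β ≤ γ k := by
  classical
  obtain ⟨A, hA⟩ := hne
  have hstrict : ∀ β, β < lam → ∃ x, x ∈ CBDeriv F P β ∧ x ∉ CBDeriv F P (β+1) := by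
    intro β hβ
    by_contra h
    push_neg at h
    have hfix : ∀ B ∈ CBDeriv F P β, {b ∈ P | insert b B ∉ CBDeriv F P β}.Finite := by
      intro B hB
      have hB1 := h B hB
      rw [CBDeriv_succ_char hF] at hB1
      exact hB1.2.2
    have hDF : CBDeriv F P β ⊆ F := fun y hy => by
      have hy0 := CBDeriv_anti F P (zero_le : (0 : Ordinal.{0}) ≤ β) hy
      rwa [CBDeriv_zero] at hy0
    have hemp : CBDeriv F P β = ∅ := fixedpoint_empty hclosed hP hDF hfix
    have : A ∈ CBDeriv F P β := CBDeriv_anti F P hβ.le hA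
    rw [hemp] at this
    exact this
  choose x hx1 hx2 using hstrict
  have hinj : Function.Injective
      (fun p : {β : Ordinal.{0} // β < lam} => x p.1 p.2) := by
    intro p q h
    have h' : x p.1 p.2 = x q.1 q.2 := h
    by_contra hne'
    have hne'' : p.1 ≠ q.1 := fun hh => hne' (Subtype.ext hh)
    rcases lt_or_gt_of_ne hne'' with hlt | hlt
    · have hle : p.1 + 1 ≤ q.1 := by
        rw [Ordinal.add_one_eq_succ]
        exact Order.succ_le_of_lt hlt
      have := CBDeriv_anti F P hle (hx1 q.1 q.2)
      rw [← h'] at this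
      exact hx2 p.1 p.2 this
    · have hle : q.1 + 1 ≤ p.1 := by
        rw [Ordinal.add_one_eq_succ]
        exact Order.succ_le_of_lt hlt
      have := CBDeriv_anti F P hle (hx1 p.1 p.2)
      rw [h'] at this
      exact hx2 q.1 q.2 this
  have hcnt : Countable {β : Ordinal.{0} // β < lam} := hinj.countable
  have hnemp : Nonempty {β : Ordinal.{0} // β < lam} := ⟨⟨0, hlim.pos⟩⟩
  obtain ⟨e, he⟩ := exists_surjective_nat {β : Ordinal.{0} // β < lam}
  set γ : ℕ → Ordinal.{0} :=
    fun k => Nat.rec (e 0).1 (fun k ih => max (ih + 1) (e (k+1)).1) k with hγ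
  have hγ0 : γ 0 = (e 0).1 := rfl
  have hγs : ∀ k, γ (k+1) = max (γ k + 1) (e (k+1)).1 := fun k => rfl
  have hγlt : ∀ k, γ k < lam := by
    intro k
    induction k with
    | zero => exact (e 0).2
    | succ k ih =>
      rw [hγs k]
      refine max_lt ?_ (e (k+1)).2
      rw [Ordinal.add_one_eq_succ]
      exact hlim.succ_lt ih
  have hmono : Monotone γ := by
    apply monotone_nat_of_le_succ
    intro k
    rw [hγs k]
    refine le_trans ?_ (le_max_left _ _)
    rw [Ordinal.add_one_eq_succ]
    exact Order.le_succ _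
  refine ⟨γ, hγlt, hmono, fun β hβ => ?_⟩
  obtain ⟨k, hk⟩ := he ⟨β, hβ⟩
  refine ⟨k, ?_⟩
  have : (e k).1 = β := by rw [hk]
  rw [← this]
  cases k with
  | zero => exact le_of_eq hγ0.symm
  | succ k =>
    rw [hγs k]
    exact le_max_right _ _

theorem famSub_hereditary (L : Set (Finset ℕ)) : Hereditary (famSub L) := by
  rintro s ⟨u, hu, hsu⟩ t hts
  exact ⟨u, hu, hts.trans hsu⟩

theorem pigeonhole {n : ℕ} {m : ℕ → ℕ} (hm : ∀ k, m k ≤ n) :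
    ∃ v, v ≤ n ∧ {k | m k = v}.Infinite := by
  by_contra h
  push_neg at h
  have hfin : (Set.univ : Set ℕ).Finite := by
    have hsub : (Set.univ : Set ℕ) ⊆ ⋃ v ∈ Set.Iic n, {k | m k = v} :=
      fun k _ => Set.mem_biUnion (hm k) rfl
    refine Set.Finite.subset (Set.Finite.biUnion (Set.finite_Iic n) ?_) hsub
    intro v hv
    exact h v hv
  exact Set.infinite_univ hfin

theorem base_transfer {𝓛 : Set (Finset ℕ)} {A : Finset ℕ} (hA : A.Nonempty)
    (hAF : A ∈ famSub 𝓛) :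
    ∃ m, m ≤ A.min' hA ∧ A.erase (A.min' hA) ∈ famSub (famAt 𝓛 m) := by
  obtain ⟨s, hs, hAs⟩ := hAF
  have hsne : s.Nonempty := hA.mono hAs
  have hm : s.min' hsne ≤ A.min' hA := Finset.min'_le s _ (hAs (Finset.min'_mem A hA))
  refine ⟨s.min' hsne, hm, s.erase (s.min' hsne), ⟨?_, ?_⟩, ?_⟩
  · rw [Finset.insert_erase (Finset.min'_mem s hsne)]
    exact hs
  · intro a ha
    exact lt_of_le_of_ne (Finset.min'_le s a (Finset.mem_of_mem_erase ha))
      (Ne.symm (Finset.ne_of_mem_erase ha))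
  · intro a ha
    obtain ⟨hane, haA⟩ := Finset.mem_erase.mp ha
    refine Finset.mem_erase.mpr ⟨?_, hAs haA⟩
    have h1 : A.min' hA ≤ a := Finset.min'_le A a haA
    have h2 : A.min' hA < a := lt_of_le_of_ne h1 (Ne.symm hane)
    omega

theorem min'_insert_of_gt {A : Finset ℕ} (hA : A.Nonempty) {b : ℕ} (hb : A.sup id < b) :
    (insert b A).min' (Finset.insert_nonempty b A) = A.min' hA := by
  apply le_antisymm
  · exact Finset.min'_le _ _ (Finset.mem_insert_of_mem (Finset.min'_mem A hA))
  · apply Finset.le_min'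
    intro y hy
    rcases Finset.mem_insert.mp hy with rfl | hy
    · have h1 : A.min' hA ≤ A.sup id := by
        have := Finset.le_sup (f := id) (Finset.min'_mem A hA)
        simpa using this
      omega
    · exact Finset.min'_le A y hy

theorem mem_erase_min'_gt {A : Finset ℕ} (hA : A.Nonempty) {a : ℕ}
    (ha : a ∈ A.erase (A.min' hA)) : A.min' hA < a := by
  obtain ⟨hane, haA⟩ := Finset.mem_erase.mp ha
  exact lt_of_le_of_ne (Finset.min'_le A a haA) (Ne.symm hane)

set_option maxHeartbeats 2000000 in
theorem main_transfer (𝓛 : Set (Finset ℕ)) (hc : PtwiseClosed (famSub 𝓛)) :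
    ∀ (β : Ordinal.{0}) (A : Finset ℕ) (hA : A.Nonempty) (P : Set ℕ), P.Infinite →
      ↑A ⊆ P → A ∈ CBDeriv (famSub 𝓛) P β →
      ∃ m, m ≤ A.min' hA ∧ ∃ L : Set ℕ, L.Infinite ∧ L ⊆ P ∩ Set.Ioi (A.min' hA) ∧
        ↑(A.erase (A.min' hA)) ⊆ L ∧
        A.erase (A.min' hA) ∈ CBDeriv (famSub (famAt 𝓛 m)) L β := by
  intro β
  induction β using Ordinal.induction with
  | h β IH =>
    intro A hA P hPinf hAP hAD
    set n := A.min' hA with hn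
    set A' := A.erase n with hA'def
    have hnA : n ∈ A := Finset.min'_mem A hA
    have hsupn : n ≤ A.sup id := by
      have := Finset.le_sup (f := id) hnA
      simpa using this
    have hA'sup : ∀ a ∈ A', a ≤ A.sup id := by
      intro a ha
      have := Finset.le_sup (f := id) (Finset.mem_of_mem_erase ha)
      simpa using this
    have hA'P : (↑A' : Set ℕ) ⊆ P ∩ Set.Ioi n := by
      intro a ha
      have ha' : a ∈ A.erase n := ha
      exact ⟨hAP (Finset.mem_coe.mpr (Finset.mem_of_mem_erase ha')),
        mem_erase_min'_gt hA ha'⟩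
    have hAcoe : ∀ (W : Set ℕ), W ⊆ P → ((W ∪ ↑A) \ P).Finite := by
      intro W hWP
      refine Set.Finite.subset Set.finite_empty ?_
      rintro x ⟨hx1 | hx2, hxP⟩
      · exact absurd (hWP hx1) hxP
      · exact absurd (hAP hx2) hxP
    have hconv : ∀ (W : Set ℕ), W ⊆ P →
        ((W ∪ ↑A) ∩ Set.Ioi n) ⊆ P ∩ Set.Ioi n := by
      rintro W hWP x ⟨hx1 | hx2, hxI⟩
      · exact ⟨hWP hx1, hxI⟩
      · exact ⟨hAP hx2, hxI⟩
    have hconv' : ∀ (W : Set ℕ),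
        ((W ∪ ↑A) ∩ Set.Ioi n) ⊆ W ∪ ↑A' := by
      rintro W x ⟨hx1 | hx2, hxI⟩
      · exact Or.inl hx1
      · refine Or.inr ?_
        have hxn : n < x := hxI
        rw [hA'def]
        exact Finset.mem_coe.mpr
          (Finset.mem_erase.mpr ⟨by omega, Finset.mem_coe.mp hx2⟩)
    rcases Ordinal.zero_or_succ_or_isSuccLimit β with rfl | ⟨a, rfl⟩ | hl
    -- ZERO CASE
    · rw [CBDeriv_zero] at hAD
      obtain ⟨m, hm, hmem⟩ := base_transfer hA hAD
      refine ⟨m, hm, P ∩ Set.Ioi n, ?_, Set.Subset.rfl, hA'P, ?_⟩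
      · exact (hPinf.diff (Set.finite_Iic n)).mono
          (fun x hx => ⟨hx.1, lt_of_not_ge (show ¬ x ≤ n from hx.2)⟩)
      · rw [CBDeriv_zero]
        exact hmem
    -- SUCCESSOR CASE
    · rw [← Ordinal.add_one_eq_succ] at hAD ⊢
      rw [CBDeriv_succ_char (famSub_hereditary 𝓛)] at hAD
      obtain ⟨hADa, hAPset, hTfin⟩ := hAD
      have halt : a < a + 1 := by
        rw [Ordinal.add_one_eq_succ]; exact Order.lt_succ a
      have hkey : ∀ (b : ℕ) (W : Set ℕ), W.Infinite → W ⊆ P → b ∈ W → A.sup id < b →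
          insert b A ∈ CBDeriv (famSub 𝓛) P a →
          ∃ m, m ≤ n ∧ ∃ L, L.Infinite ∧ L ⊆ (W ∪ ↑A) ∩ Set.Ioi n ∧ b ∈ L ∧
            (↑A' : Set ℕ) ⊆ L ∧ insert b A' ∈ CBDeriv (famSub (famAt 𝓛 m)) L a := by
        intro b W hWinf hWP hbW hbgt hbmem
        have hcoe : (↑(insert b A) : Set ℕ) ⊆ W ∪ ↑A := by
          rw [Finset.coe_insert]
          exact Set.insert_subset (Or.inl hbW) Set.subset_union_right
        have hrest : insert b A ∈ CBDeriv (famSub 𝓛) (W ∪ ↑A) a :=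
          CBDeriv_restrict (famSub_hereditary 𝓛) a (hAcoe W hWP) hcoe hbmem
        have hbne : (insert b A).Nonempty := Finset.insert_nonempty _ _
        have hWA : (W ∪ ↑A).Infinite := hWinf.mono Set.subset_union_left
        obtain ⟨m, hm, L, hLinf, hLsub, hLA', hLmem⟩ :=
          IH a halt (insert b A) hbne (W ∪ ↑A) hWA hcoe hrest
        have hmin : (insert b A).min' hbne = n := min'_insert_of_gt hA hbgt
        rw [hmin] at hm hLsub hLA' hLmem
        have herase : (insert b A).erase n = insert b A' := by
          rw [hA'def]
          exact Finset.erase_insert_of_ne (by omega)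
        rw [herase] at hLA' hLmem
        refine ⟨m, hm, L, hLinf, hLsub, ?_, ?_, hLmem⟩
        · exact hLA' (Finset.mem_coe.mpr (Finset.mem_insert_self b A'))
        · exact fun x hx => hLA'
            (Finset.mem_coe.mpr (Finset.mem_insert_of_mem (Finset.mem_coe.mp hx)))
      have hGood : ∀ (k : ℕ) (s : ℕ × ℕ × Set ℕ),
          (s.1 ∈ P ∧ A.sup id < s.1 ∧ s.2.1 ≤ n ∧ s.2.2.Infinite ∧
            s.2.2 ⊆ P ∩ Set.Ioi n ∧ s.1 ∈ s.2.2 ∧ (↑A' : Set ℕ) ⊆ s.2.2 ∧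
            insert s.1 A' ∈ CBDeriv (famSub (famAt 𝓛 s.2.1)) s.2.2 a) →
          ∃ t : ℕ × ℕ × Set ℕ,
            (t.1 ∈ P ∧ A.sup id < t.1 ∧ t.2.1 ≤ n ∧ t.2.2.Infinite ∧
              t.2.2 ⊆ P ∩ Set.Ioi n ∧ t.1 ∈ t.2.2 ∧ (↑A' : Set ℕ) ⊆ t.2.2 ∧
              insert t.1 A' ∈ CBDeriv (famSub (famAt 𝓛 t.2.1)) t.2.2 a) ∧
            (s.1 < t.1 ∧ t.2.2 ⊆ s.2.2 ∪ ↑A' ∧ t.1 ∈ s.2.2) := by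
        rintro k ⟨b, m, L⟩ ⟨hbP, hbgt, hmn, hLinf, hLP, hbL, hA'L, hmem⟩
        obtain ⟨b', hb'⟩ :=
          (hLinf.diff ((hTfin.union (Set.finite_Iic b)))).nonempty
        have hb'L : b' ∈ L := hb'.1
        have hb'P : b' ∈ P := (hLP hb'L).1
        have hb'b : b < b' := by
          by_contra h
          exact hb'.2 (Or.inr (le_of_not_gt h))
        have hb'gt : A.sup id < b' := lt_trans hbgt hb'b
        have hb'mem : insert b' A ∈ CBDeriv (famSub 𝓛) P a := by
          by_contra h
          exact hb'.2 (Or.inl ⟨hb'P, h⟩)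
        have hLPP : L ⊆ P := fun x hx => (hLP hx).1
        obtain ⟨m', hm', L', hL'inf, hL'sub, hb'L', hA'L', hmem'⟩ :=
          hkey b' L hLinf hLPP hb'L hb'gt hb'mem
        exact ⟨(b', m', L'),
          ⟨hb'P, hb'gt, hm', hL'inf, (hL'sub.trans (hconv L hLPP)),
            hb'L', hA'L', hmem'⟩,
          hb'b, hL'sub.trans (hconv' L), hb'L⟩
      obtain ⟨b₀, hb₀⟩ :=
        (hPinf.diff ((hTfin.union (Set.finite_Iic (A.sup id))))).nonempty
      have hb₀P : b₀ ∈ P := hb₀.1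
      have hb₀gt : A.sup id < b₀ := by
        by_contra h
        exact hb₀.2 (Or.inr (le_of_not_gt h))
      have hb₀mem : insert b₀ A ∈ CBDeriv (famSub 𝓛) P a := by
        by_contra h
        exact hb₀.2 (Or.inl ⟨hb₀P, h⟩)
      obtain ⟨m₀, hm₀, L₀, hL₀inf, hL₀sub, hb₀L₀, hA'L₀, hmem₀⟩ :=
        hkey b₀ P hPinf Set.Subset.rfl hb₀P hb₀gt hb₀mem
      obtain ⟨f, hf0, hfP, hfR⟩ := exists_chain
        (fun _ s => s.1 ∈ P ∧ A.sup id < s.1 ∧ s.2.1 ≤ n ∧ s.2.2.Infinite ∧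
          s.2.2 ⊆ P ∩ Set.Ioi n ∧ s.1 ∈ s.2.2 ∧ (↑A' : Set ℕ) ⊆ s.2.2 ∧
          insert s.1 A' ∈ CBDeriv (famSub (famAt 𝓛 s.2.1)) s.2.2 a)
        (fun _ s t => s.1 < t.1 ∧ t.2.2 ⊆ s.2.2 ∪ ↑A' ∧ t.1 ∈ s.2.2)
        (b₀, m₀, L₀)
        ⟨hb₀P, hb₀gt, hm₀, hL₀inf, hL₀sub.trans (hconv P Set.Subset.rfl),
          hb₀L₀, hA'L₀, hmem₀⟩
        hGood
      set bs : ℕ → ℕ := fun k => (f k).1 with hbs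
      set ms : ℕ → ℕ := fun k => (f k).2.1 with hms
      set Ls : ℕ → Set ℕ := fun k => (f k).2.2 with hLsdef
      have hbmono : StrictMono bs := strictMono_nat_of_lt_succ (fun k => (hfR k).1)
      have hnest : ∀ k j, k ≤ j → Ls j ⊆ Ls k ∪ ↑A' := by
        intro k j hkj
        induction j, hkj using Nat.le_induction with
        | base => exact Set.subset_union_left
        | succ j hkj ih =>
          intro x hx
          rcases (hfR j).2.1 hx with h | h
          · exact ih h
          · exact Or.inr h
      have hbin : ∀ k j, k < j → bs j ∈ Ls k := by
        intro k j hkj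
        have h1 : bs j ∈ Ls (j-1) := by
          have hj : j - 1 + 1 = j := by omega
          have := (hfR (j-1)).2.2
          rwa [hj] at this
        rcases hnest k (j-1) (by omega) h1 with h | h
        · exact h
        · exfalso
          have h2 : bs j ≤ A.sup id := hA'sup _ (Finset.mem_coe.mp h)
          have h3 : A.sup id < bs j := (hfP j).2.1
          omega
      obtain ⟨m, hmle, hK⟩ := pigeonhole (n := n) (m := ms) (fun k => (hfP k).2.2.1)
      have hLstarinf : (bs '' {k | ms k = m} ∪ ↑A').Infinite :=
        (hK.image (hbmono.injective.injOn)).mono Set.subset_union_left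
      have hLstarP : bs '' {k | ms k = m} ∪ ↑A' ⊆ P ∩ Set.Ioi n := by
        rintro x (⟨k, hk, rfl⟩ | hx)
        · exact (hfP k).2.2.2.2.1 (hfP k).2.2.2.2.2.1
        · exact hA'P hx
      have hA'Lstar : (↑A' : Set ℕ) ⊆ bs '' {k | ms k = m} ∪ ↑A' :=
        Set.subset_union_right
      have hgoodk : ∀ k, ms k = m →
          insert (bs k) A' ∈ CBDeriv (famSub (famAt 𝓛 m))
            (bs '' {k | ms k = m} ∪ ↑A') a := by
        intro k hk
        have hmem : insert (bs k) A' ∈ CBDeriv (famSub (famAt 𝓛 (ms k))) (Ls k) a :=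
          (hfP k).2.2.2.2.2.2.2
        rw [hk] at hmem
        refine CBDeriv_restrict (famSub_hereditary _) a ?_ ?_ hmem
        · refine Set.Finite.subset (Set.Finite.union
            ((Set.finite_Iic k).image bs) (A'.finite_toSet)) ?_
          rintro x ⟨⟨j, hj, rfl⟩ | hx, hxnot⟩
          · rcases le_or_gt j k with hjk | hjk
            · exact Or.inl ⟨j, hjk, rfl⟩
            · exact absurd (hbin k j hjk) hxnot
          · exact Or.inr hx
        · rw [Finset.coe_insert]
          exact Set.insert_subset (Or.inl ⟨k, hk, rfl⟩) hA'Lstar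
      obtain ⟨k₀, hk₀⟩ := hK.nonempty
      have hA'mem : A' ∈ CBDeriv (famSub (famAt 𝓛 m)) (bs '' {k | ms k = m} ∪ ↑A') a :=
        hered_CBDeriv (famSub_hereditary _) _ a _ (hgoodk k₀ hk₀) A'
          (Finset.subset_insert _ _)
      refine ⟨m, hmle, bs '' {k | ms k = m} ∪ ↑A', hLstarinf, hLstarP, hA'Lstar, ?_⟩
      rw [CBDeriv_succ_char (famSub_hereditary _)]
      refine ⟨hA'mem, hA'Lstar, ?_⟩
      refine Set.Finite.subset Set.finite_empty ?_
      rintro c ⟨hcL, hcbad⟩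
      rcases hcL with ⟨k, hk, rfl⟩ | hcA'
      · exact hcbad (hgoodk k hk)
      · refine hcbad ?_
        rw [Finset.insert_eq_self.mpr (Finset.mem_coe.mp hcA')]
        exact hA'mem
    -- LIMIT CASE
    · obtain ⟨γ, hγlt, hγmono, hγcof⟩ :=
        exists_cofinal_seq (famSub_hereditary 𝓛) hc hPinf hl ⟨A, hAD⟩
      have hkey : ∀ (k : ℕ) (W : Set ℕ), W.Infinite → W ⊆ P →
          ∃ m, m ≤ n ∧ ∃ L, L.Infinite ∧ L ⊆ (W ∪ ↑A) ∩ Set.Ioi n ∧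
            (↑A' : Set ℕ) ⊆ L ∧ A' ∈ CBDeriv (famSub (famAt 𝓛 m)) L (γ k) := by
        intro k W hWinf hWP
        have hmem : A ∈ CBDeriv (famSub 𝓛) P (γ k) :=
          CBDeriv_anti _ _ (hγlt k).le hAD
        have hcoe : (↑A : Set ℕ) ⊆ W ∪ ↑A := Set.subset_union_right
        have hrest := CBDeriv_restrict (famSub_hereditary 𝓛) (γ k) (hAcoe W hWP)
          hcoe hmem
        exact IH (γ k) (hγlt k) A hA (W ∪ ↑A) (hWinf.mono Set.subset_union_left)
          hcoe hrest
      obtain ⟨m₀, hm₀, L₀, hL₀inf, hL₀sub, hA'L₀, hmem₀⟩ := hkey 0 P hPinf Set.Subset.rfl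
      obtain ⟨c₀, hc₀⟩ := (hL₀inf.diff (Set.finite_Iic (A.sup id))).nonempty
      have hc₀gt : A.sup id < c₀ := lt_of_not_ge (fun h => hc₀.2 h)
      have hstep : ∀ (k : ℕ) (s : ℕ × ℕ × Set ℕ),
          (s.1 ∈ s.2.2 ∧ A.sup id < s.1 ∧ s.2.1 ≤ n ∧ s.2.2.Infinite ∧
            s.2.2 ⊆ P ∩ Set.Ioi n ∧ (↑A' : Set ℕ) ⊆ s.2.2 ∧
            A' ∈ CBDeriv (famSub (famAt 𝓛 s.2.1)) s.2.2 (γ k)) →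
          ∃ t : ℕ × ℕ × Set ℕ,
            (t.1 ∈ t.2.2 ∧ A.sup id < t.1 ∧ t.2.1 ≤ n ∧ t.2.2.Infinite ∧
              t.2.2 ⊆ P ∩ Set.Ioi n ∧ (↑A' : Set ℕ) ⊆ t.2.2 ∧
              A' ∈ CBDeriv (famSub (famAt 𝓛 t.2.1)) t.2.2 (γ (k+1))) ∧
            (s.1 < t.1 ∧ t.2.2 ⊆ s.2.2 ∪ ↑A') := by
        rintro k ⟨c, m, L⟩ ⟨hcL, hcgt, hmn, hLinf, hLP, hA'L, hmem⟩
        have hLPP : L ⊆ P := fun x hx => (hLP hx).1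
        obtain ⟨m', hm', L', hL'inf, hL'sub, hA'L', hmem'⟩ :=
          hkey (k+1) L hLinf hLPP
        obtain ⟨c', hc'⟩ :=
          (hL'inf.diff (Set.finite_Iic (max c (A.sup id)))).nonempty
        have hc'gt : max c (A.sup id) < c' := lt_of_not_ge (fun h => hc'.2 h)
        exact ⟨(c', m', L'),
          ⟨hc'.1, lt_of_le_of_lt (le_max_right _ _) hc'gt, hm', hL'inf,
            hL'sub.trans (hconv L hLPP), hA'L', hmem'⟩,
          lt_of_le_of_lt (le_max_left _ _) hc'gt, hL'sub.trans (hconv' L)⟩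
      obtain ⟨f, hf0, hfP, hfR⟩ := exists_chain
        (fun k s => s.1 ∈ s.2.2 ∧ A.sup id < s.1 ∧ s.2.1 ≤ n ∧ s.2.2.Infinite ∧
          s.2.2 ⊆ P ∩ Set.Ioi n ∧ (↑A' : Set ℕ) ⊆ s.2.2 ∧
          A' ∈ CBDeriv (famSub (famAt 𝓛 s.2.1)) s.2.2 (γ k))
        (fun _ s t => s.1 < t.1 ∧ t.2.2 ⊆ s.2.2 ∪ ↑A')
        (c₀, m₀, L₀)
        ⟨hc₀.1, hc₀gt, hm₀, hL₀inf, hL₀sub.trans (hconv P Set.Subset.rfl),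
          hA'L₀, hmem₀⟩
        hstep
      set cs : ℕ → ℕ := fun k => (f k).1 with hcs
      set ms : ℕ → ℕ := fun k => (f k).2.1 with hms
      set Ls : ℕ → Set ℕ := fun k => (f k).2.2 with hLsdef
      have hcmono : StrictMono cs := strictMono_nat_of_lt_succ (fun k => (hfR k).1)
      have hnest : ∀ k j, k ≤ j → Ls j ⊆ Ls k ∪ ↑A' := by
        intro k j hkj
        induction j, hkj using Nat.le_induction with
        | base => exact Set.subset_union_left
        | succ j hkj ih =>
          intro x hx
          rcases (hfR j).2 hx with h | h
          · exact ih h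
          · exact Or.inr h
      have hcin : ∀ k j, k ≤ j → cs j ∈ Ls k := by
        intro k j hkj
        rcases hnest k j hkj (hfP j).1 with h | h
        · exact h
        · exfalso
          have h2 : cs j ≤ A.sup id := hA'sup _ (Finset.mem_coe.mp h)
          have h3 : A.sup id < cs j := (hfP j).2.1
          omega
      obtain ⟨m, hmle, hK⟩ := pigeonhole (n := n) (m := ms) (fun k => (hfP k).2.2.1)
      have hLstarinf : (cs '' {k | ms k = m} ∪ ↑A').Infinite :=
        (hK.image (hcmono.injective.injOn)).mono Set.subset_union_left
      have hLstarP : cs '' {k | ms k = m} ∪ ↑A' ⊆ P ∩ Set.Ioi n := by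
        rintro x (⟨k, hk, rfl⟩ | hx)
        · exact (hfP k).2.2.2.2.1 (hfP k).1
        · exact hA'P hx
      have hA'Lstar : (↑A' : Set ℕ) ⊆ cs '' {k | ms k = m} ∪ ↑A' :=
        Set.subset_union_right
      have hgoodk : ∀ k, ms k = m →
          A' ∈ CBDeriv (famSub (famAt 𝓛 m)) (cs '' {k | ms k = m} ∪ ↑A') (γ k) := by
        intro k hk
        have hmem : A' ∈ CBDeriv (famSub (famAt 𝓛 (ms k))) (Ls k) (γ k) :=
          (hfP k).2.2.2.2.2.2
        rw [hk] at hmem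
        refine CBDeriv_restrict (famSub_hereditary _) (γ k) ?_ hA'Lstar hmem
        refine Set.Finite.subset (Set.Finite.union
          ((Set.finite_Iic k).image cs) (A'.finite_toSet)) ?_
        rintro x ⟨⟨j, hj, rfl⟩ | hx, hxnot⟩
        · rcases le_or_gt j k with hjk | hjk
          · exact Or.inl ⟨j, hjk, rfl⟩
          · exact absurd (hcin k j hjk.le) hxnot
        · exact Or.inr hx
      refine ⟨m, hmle, cs '' {k | ms k = m} ∪ ↑A', hLstarinf, hLstarP, hA'Lstar, ?_⟩
      rw [CBDeriv_limit _ _ _ hl]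
      rw [Set.mem_iInter₂]
      intro β' hβ'
      obtain ⟨k₀, hk₀⟩ := hγcof β' hβ'
      obtain ⟨k, hkK, hkk₀⟩ : ∃ k, ms k = m ∧ k₀ ≤ k := by
        by_contra h
        push_neg at h
        refine hK (Set.Finite.subset (Set.finite_Iic k₀) ?_)
        intro j hj
        exact le_of_lt (h j hj)
      exact CBDeriv_anti _ _ (le_trans hk₀ (hγmono hkk₀)) (hgoodk k hkK)

/-- **Proposition 1.16.** If `ℒ_*` and every `(ℒ(n))_*` are pointwise closed
and `ξ = sup { s_L((ℒ(n))_*) : n ∈ ℕ, L ∈ [M] }`, then `(ℒ_*)^ξ_M ⊆ {∅}` and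
hence `s_M(ℒ_*) ≤ ξ + 1`. -/
theorem index_upper_bound (𝓛 : Set (Finset ℕ)) (hc : PtwiseClosed (famSub 𝓛))
    (hcn : ∀ n : ℕ, PtwiseClosed (famSub (famAt 𝓛 n)))
    (M : Set ℕ) (hM : M.Infinite) (ξ : Ordinal.{0})
    (hξ : ξ = sSup {o : Ordinal.{0} | ∃ (n : ℕ) (L : Set ℕ), L ⊆ M ∧ L.Infinite ∧
        o = CBIndex (famSub (famAt 𝓛 n)) L}) :
    CBDeriv (famSub 𝓛) M ξ ⊆ {(∅ : Finset ℕ)} ∧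
      CBIndex (famSub 𝓛) M ≤ ξ + 1 := by
  have hFhered := famSub_hereditary 𝓛
  have hbdd : BddAbove {o : Ordinal.{0} | ∃ (n : ℕ) (L : Set ℕ), L ⊆ M ∧ L.Infinite ∧
      o = CBIndex (famSub (famAt 𝓛 n)) L} := by
    obtain ⟨u, hu⟩ := Ordinal.bddAbove_range.{0,0}
      (fun p : ℕ × Set ℕ => CBIndex (famSub (famAt 𝓛 p.1)) p.2)
    refine ⟨u, ?_⟩
    rintro o ⟨nn, L, _, _, rfl⟩
    exact hu ⟨(nn, L), rfl⟩
  have hpart1 : CBDeriv (famSub 𝓛) M ξ ⊆ {(∅ : Finset ℕ)} := by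
    intro A hAD
    rw [Set.mem_singleton_iff]
    by_contra hAne
    have hA : A.Nonempty := Finset.nonempty_iff_ne_empty.mpr hAne
    rcases eq_or_ne ξ 0 with rfl | hξne
    · -- ξ = 0
      rw [CBDeriv_zero] at hAD
      obtain ⟨m, _, hmem⟩ := base_transfer hA hAD
      have hidx : CBIndex (famSub (famAt 𝓛 m)) M ≤ (0 : Ordinal.{0}) := by
        rw [hξ]
        exact le_csSup hbdd ⟨m, M, Set.Subset.rfl, hM, rfl⟩
      have hidx0 : CBIndex (famSub (famAt 𝓛 m)) M = 0 := le_antisymm hidx zero_le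
      have hemp := CBDeriv_CBIndex_empty (famSub_hereditary (famAt 𝓛 m)) (hcn m) hM
      rw [hidx0, CBDeriv_zero] at hemp
      rw [hemp] at hmem
      exact hmem
    · -- ξ > 0
      have hAM : (↑A : Set ℕ) ⊆ M := by
        have h1 : A ∈ CBDeriv (famSub 𝓛) M 1 :=
          CBDeriv_anti _ _ (Ordinal.one_le_iff_ne_zero.mpr hξne) hAD
        rw [show (1 : Ordinal.{0}) = 0 + 1 by rw [zero_add], CBDeriv_succ] at h1
        exact h1.2.1
      obtain ⟨m, hm, L, hLinf, hLsub, hA'L, hmem⟩ :=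
        main_transfer 𝓛 hc ξ A hA M hM hAM hAD
      have hLM : L ⊆ M := hLsub.trans Set.inter_subset_left
      have hidx : CBIndex (famSub (famAt 𝓛 m)) L ≤ ξ := by
        rw [hξ]
        exact le_csSup hbdd ⟨m, L, hLM, hLinf, rfl⟩
      have hemp := CBDeriv_CBIndex_empty (famSub_hereditary (famAt 𝓛 m)) (hcn m) hLinf
      have := CBDeriv_anti (famSub (famAt 𝓛 m)) L hidx hmem
      rw [hemp] at this
      exact this
  refine ⟨hpart1, ?_⟩
  have hempty : CBDeriv (famSub 𝓛) M (ξ + 1) = ∅ := by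
    by_contra h
    obtain ⟨A, hA⟩ := Set.nonempty_iff_ne_empty.mpr h
    rw [CBDeriv_succ_char hFhered] at hA
    obtain ⟨h1, h2, h3⟩ := hA
    refine hM (h3.subset ?_)
    intro b hb
    refine ⟨hb, fun hmem => ?_⟩
    have := hpart1 hmem
    rw [Set.mem_singleton_iff] at this
    exact Finset.insert_ne_empty b A this
  exact csInf_le' hempty
end

section
/- Let ξ be a countable ordinal, M an infinite subset of ℕ, and ℒ an ω^ξ-uniform family on M. Then there exists an infinite subset L of M such that ℱ_ξ(L) ⊆ ℒ*. -/
open Ordinal Filter Set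

/-- The Schreier-type families `𝓑_a`, relative to a choice `c` of cofinal
sequences at limit ordinals. -/
noncomputable def SchreierB (c : Ordinal.{0} → ℕ → Ordinal.{0}) (a : Ordinal.{0}) :
    Set (Finset ℕ) :=
  Ordinal.limitRecOn a
    {s : Finset ℕ | ∃ n : ℕ, s = {n}}
    (fun _ ih => {s | ∃ (n : ℕ) (f : ℕ → Finset ℕ),
        0 < n ∧ (∃ h : (f 0).Nonempty, (f 0).min' h = n) ∧
        (∀ i < n, f i ∈ ih) ∧
        (∀ i j, i < j → j < n → FinLT (f i) (f j)) ∧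
        s = (Finset.range n).biUnion f})
    (fun a _ ih => {s | ∃ (h : s.Nonempty) (hlt : c a (s.min' h) < a), s ∈ ih _ hlt})

/-- The generalized Schreier system `ℱ_a`, relative to a choice `c` of cofinal
sequences at limit ordinals. -/
noncomputable def SchreierF (c : Ordinal.{0} → ℕ → Ordinal.{0}) (a : Ordinal.{0}) :
    Set (Finset ℕ) :=
  Ordinal.limitRecOn a
    {s : Finset ℕ | ∃ n : ℕ, s = {n}}
    (fun _ ih => {s | ∃ (n : ℕ) (f : ℕ → Finset ℕ),
        0 < n ∧ (∀ x ∈ f 0, n ≤ x) ∧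
        (∀ i < n, f i ∈ ih) ∧
        (∀ i j, i < j → j < n → FinLT (f i) (f j)) ∧
        s = (Finset.range n).biUnion f})
    (fun a _ ih => {s | ∃ (n : ℕ) (hlt : c a n < a), s ∈ ih _ hlt ∧ ∀ x ∈ s, n ≤ x})

/-- `c` is an admissible choice of cofinal sequences: at every countable limit
ordinal `a`, `c a` is an increasing sequence of ordinals below `a` with
supremum `a`. -/
def AdmissibleChoice (c : Ordinal.{0} → ℕ → Ordinal.{0}) : Prop :=
  ∀ a : Ordinal.{0}, Order.IsSuccLimit a → a.card ≤ Cardinal.aleph0 →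
    StrictMono (c a) ∧ (∀ n, c a n < a) ∧ (∀ β < a, ∃ n, β ≤ c a n)


/-! ### Auxiliary development -/

attribute [local instance] Classical.propDecidable

namespace SchreierAux

/-- number of elements of `L` below `x`. -/
noncomputable def cnt (L : Set ℕ) (x : ℕ) : ℕ :=
  ((Finset.range x).filter (fun n => n ∈ L)).card

theorem cnt_mono_set {L L' : Set ℕ} (h : L ⊆ L') (x : ℕ) : cnt L x ≤ cnt L' x := by
  apply Finset.card_le_card
  intro z hz
  simp only [Finset.mem_filter] at *
  exact ⟨hz.1, h hz.2⟩

theorem cnt_mono {L : Set ℕ} {x y : ℕ} (h : x ≤ y) : cnt L x ≤ cnt L y := by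
  apply Finset.card_le_card
  intro z hz
  simp only [Finset.mem_filter, Finset.mem_range] at *
  exact ⟨lt_of_lt_of_le hz.1 h, hz.2⟩

theorem cnt_strict {L : Set ℕ} {x y : ℕ} (hx : x ∈ L) (h : x < y) : cnt L x < cnt L y := by
  apply Finset.card_lt_card
  constructor
  · intro z hz
    simp only [Finset.mem_filter, Finset.mem_range] at *
    exact ⟨lt_trans hz.1 h, hz.2⟩
  · intro hsub
    have : x ∈ (Finset.range y).filter (fun n => n ∈ L) := by
      simp only [Finset.mem_filter, Finset.mem_range]; exact ⟨h, hx⟩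
    have := hsub this
    simp only [Finset.mem_filter, Finset.mem_range] at this
    exact lt_irrefl x this.1

theorem cnt_lt_iff {L : Set ℕ} {x y : ℕ} (hx : x ∈ L) (hy : y ∈ L) :
    cnt L x < cnt L y ↔ x < y := by
  constructor
  · intro h
    by_contra hle
    push_neg at hle
    rcases lt_or_eq_of_le hle with h' | h'
    · have := cnt_strict hy h'; omega
    · subst h'; omega
  · exact cnt_strict hx

theorem cnt_injOn {L : Set ℕ} {x y : ℕ} (hx : x ∈ L) (hy : y ∈ L)
    (h : cnt L x = cnt L y) : x = y := by
  rcases lt_trichotomy x y with h' | h' | h'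
  · exact absurd (cnt_strict hx h') (by omega)
  · exact h'
  · exact absurd (cnt_strict hy h') (by omega)

/-- counting along a strictly monotone enumeration. -/
theorem cnt_enum {L : Set ℕ} {e : ℕ → ℕ} (he : StrictMono e)
    (hmem : ∀ n, e n ∈ L) (hsurj : ∀ x ∈ L, ∃ n, e n = x) (n : ℕ) :
    cnt L (e n) = n := by
  have : (Finset.range (e n)).filter (fun z => z ∈ L) = (Finset.range n).image e := by
    ext z
    simp only [Finset.mem_filter, Finset.mem_range, Finset.mem_image]
    constructor
    · rintro ⟨hlt, hz⟩
      obtain ⟨m, rfl⟩ := hsurj z hz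
      exact ⟨m, he.lt_iff_lt.mp hlt, rfl⟩
    · rintro ⟨m, hm, rfl⟩
      exact ⟨he hm, hmem m⟩
  rw [cnt, this, Finset.card_image_of_injective _ he.injective, Finset.card_range]

theorem cnt_succ_of_mem {L : Set ℕ} {x : ℕ} (hx : x ∈ L) : cnt L (x + 1) = cnt L x + 1 := by
  unfold cnt
  rw [Finset.range_add_one, Finset.filter_insert, if_pos hx,
    Finset.card_insert_of_notMem (by simp)]

theorem cnt_exists {L : Set ℕ} (hL : L.Infinite) (i : ℕ) : ∃ x ∈ L, cnt L x = i := by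
  induction i with
  | zero =>
    have hex : ∃ n, n ∈ L := hL.nonempty
    refine ⟨Nat.find hex, Nat.find_spec hex, ?_⟩
    rw [cnt, Finset.card_eq_zero, Finset.filter_eq_empty_iff]
    intro z hz
    exact Nat.find_min hex (Finset.mem_range.mp hz)
  | succ i ih =>
    obtain ⟨x, hx, hcnt⟩ := ih
    have hex2 : ∃ n, n ∈ L ∧ x < n := by
      obtain ⟨b, hb, hbx⟩ := hL.exists_gt x
      exact ⟨b, hb, hbx⟩
    set y := Nat.find hex2 with hy
    obtain ⟨hyL, hxy⟩ := Nat.find_spec hex2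
    refine ⟨y, hyL, ?_⟩
    have heq : cnt L y = cnt L (x + 1) := by
      unfold cnt
      congr 1
      ext z
      simp only [Finset.mem_filter, Finset.mem_range]
      constructor
      · rintro ⟨hzy, hzL⟩
        rcases le_or_gt z x with h | h
        · exact ⟨by omega, hzL⟩
        · have : y ≤ z := Nat.find_le ⟨hzL, h⟩
          omega
      · rintro ⟨hzx, hzL⟩
        exact ⟨by omega, hzL⟩
    rw [heq, cnt_succ_of_mem hx, hcnt]

theorem cnt_unbounded {L : Set ℕ} (hL : L.Infinite) (j : ℕ) : ∃ x ∈ L, j ≤ cnt L x := by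
  obtain ⟨x, hx, hc⟩ := cnt_exists hL j
  exact ⟨x, hx, hc.ge⟩


/-- the set of indices (within `L`) of the elements of `s`. -/
noncomputable def mapIdx (L : Set ℕ) (s : Finset ℕ) : Finset ℕ := s.image (cnt L)

/-- the members of `L` beyond all elements of `s`. -/
def TailSet (L : Set ℕ) (s : Finset ℕ) : Set ℕ := {x ∈ L | ∀ y ∈ s, y < x}

/-- A family of finite sets is spreading-closed. -/
def SpreadClosed (F : Set (Finset ℕ)) : Prop :=
  ∀ t ∈ F, ∀ g : ℕ → ℕ, (∀ x ∈ t, ∀ y ∈ t, x < y → g x < g y) →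
    (∀ x ∈ t, x ≤ g x) → t.image g ∈ F

theorem tailSet_subset {L : Set ℕ} {s : Finset ℕ} : TailSet L s ⊆ L := fun _ h => h.1

theorem tailSet_infinite {L : Set ℕ} (hL : L.Infinite) (s : Finset ℕ) :
    (TailSet L s).Infinite := by
  apply Set.Infinite.mono _ (hL.diff (Set.finite_Iic (s.sup id)))
  intro x hx
  refine ⟨hx.1, fun y hy => ?_⟩
  have h1 : y ≤ s.sup id := Finset.le_sup (f := id) hy
  have h2 : ¬ x ≤ s.sup id := hx.2
  omega

theorem mapIdx_empty (L : Set ℕ) : mapIdx L ∅ = ∅ := rfl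

theorem mapIdx_eq_empty {L : Set ℕ} {s : Finset ℕ} (h : mapIdx L s = ∅) : s = ∅ := by
  by_contra hne
  obtain ⟨x, hx⟩ := Finset.nonempty_iff_ne_empty.mpr hne
  have : cnt L x ∈ mapIdx L s := Finset.mem_image_of_mem _ hx
  rw [h] at this
  exact absurd this (Finset.notMem_empty _)

/-- Transfer of membership in a spreading-closed family along an index-increasing
change of ambient set. -/
theorem spread {F : Set (Finset ℕ)} (hF : SpreadClosed F) {L L' : Set ℕ} {s : Finset ℕ}
    (hsL : ↑s ⊆ L) (hsL' : ↑s ⊆ L') (hcnt : ∀ x ∈ s, cnt L x ≤ cnt L' x)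
    (h : mapIdx L s ∈ F) : mapIdx L' s ∈ F := by
  classical
  set g : ℕ → ℕ := fun i => if h : ∃ x ∈ s, cnt L x = i then cnt L' h.choose else i with hg
  have key : ∀ x ∈ s, g (cnt L x) = cnt L' x := by
    intro x hx
    have hex : ∃ y ∈ s, cnt L y = cnt L x := ⟨x, hx, rfl⟩
    have hch := hex.choose_spec
    have : hex.choose = x :=
      cnt_injOn (hsL hch.1) (hsL hx) hch.2
    simp only [hg, dif_pos hex]
    rw [this]
  have himg : (mapIdx L s).image g = mapIdx L' s := by
    unfold mapIdx
    rw [Finset.image_image]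
    apply Finset.image_congr
    intro x hx
    exact key x hx
  rw [← himg]
  apply hF _ h g
  · intro i hi j hj hij
    obtain ⟨x, hx, rfl⟩ := Finset.mem_image.mp hi
    obtain ⟨y, hy, rfl⟩ := Finset.mem_image.mp hj
    rw [key x hx, key y hy]
    have hxy : x < y := (cnt_lt_iff (hsL hx) (hsL hy)).mp hij
    exact cnt_strict (hsL' hx) hxy
  · intro i hi
    obtain ⟨x, hx, rfl⟩ := Finset.mem_image.mp hi
    rw [key x hx]
    exact hcnt x hx

/-! ### Residues and stars -/

/-- the residue family of `𝓛` past the finite set `t`. -/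
def res (𝓛 : Set (Finset ℕ)) (t : Finset ℕ) : Set (Finset ℕ) :=
  {u | t ∪ u ∈ 𝓛 ∧ FinLT t u}

theorem res_empty (𝓛 : Set (Finset ℕ)) : res 𝓛 ∅ = 𝓛 := by
  ext u
  simp [res, FinLT]

theorem res_mono {𝓛 𝓛' : Set (Finset ℕ)} (h : 𝓛 ⊆ 𝓛') (t : Finset ℕ) :
    res 𝓛 t ⊆ res 𝓛' t := fun u hu => ⟨h hu.1, hu.2⟩

theorem res_singleton (𝓛 : Set (Finset ℕ)) (m : ℕ) : res 𝓛 {m} = famAt 𝓛 m := by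
  ext u
  simp only [res, famAt, FinLT, Set.mem_setOf_eq, Finset.mem_singleton]
  constructor
  · rintro ⟨h1, h2⟩
    rw [← Finset.insert_eq] at h1
    exact ⟨h1, fun a ha => h2 m rfl a ha⟩
  · rintro ⟨h1, h2⟩
    rw [← Finset.insert_eq]
    exact ⟨h1, fun a ha b hb => by rw [ha]; exact h2 b hb⟩

theorem res_res (𝓛 : Set (Finset ℕ)) {t s : Finset ℕ} (hts : FinLT t s) :
    res (res 𝓛 t) s = res 𝓛 (t ∪ s) := by
  ext u
  simp only [res, Set.mem_setOf_eq, FinLT]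
  constructor
  · rintro ⟨⟨h1, h2⟩, h3⟩
    rw [← Finset.union_assoc] at h1
    refine ⟨h1, fun a ha b hb => ?_⟩
    rcases Finset.mem_union.mp ha with h | h
    · exact h2 a h b (Finset.mem_union_right _ hb)
    · exact h3 a h b hb
  · rintro ⟨h1, h2⟩
    rw [Finset.union_assoc] at h1
    refine ⟨⟨h1, fun a ha b hb => ?_⟩, fun a ha b hb => h2 a (Finset.mem_union_right _ ha) b hb⟩
    rcases Finset.mem_union.mp hb with h | h
    · exact hts a ha b h
    · exact h2 a (Finset.mem_union_left _ ha) b h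

theorem mem_famStar_of_res {𝓛 : Set (Finset ℕ)} {s u : Finset ℕ} (hu : u ∈ res 𝓛 s) :
    s ∈ famStar 𝓛 := by
  refine ⟨s ∪ u, hu.1, Finset.subset_union_left, fun a ha b hb hab => ?_⟩
  rcases Finset.mem_union.mp ha with h | h
  · exact h
  · exact absurd hab (by have := hu.2 b hb a h; omega)

/-! ### Uniform families: nonemptiness and restriction -/

theorem inter_Ioi_infinite {M : Set ℕ} (hM : M.Infinite) (m : ℕ) :
    (M ∩ Set.Ioi m).Infinite := by
  apply Set.Infinite.mono _ (hM.diff (Set.finite_Iic m))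
  intro x hx
  exact ⟨hx.1, by simpa using hx.2⟩


theorem uniform_nonempty {α : Ordinal} {𝓛 : Set (Finset ℕ)} {M : Set ℕ}
    (h : IsUniform α 𝓛 M) (hM : M.Infinite) : ∃ u, u ∈ 𝓛 := by
  induction h with
  | zero M => exact ⟨∅, rfl⟩
  | succ ζ 𝓛 M hsub hne h ih =>
    obtain ⟨m, hm⟩ := hM.nonempty
    obtain ⟨u, hu⟩ := ih m hm (inter_Ioi_infinite hM m)
    exact ⟨insert m u, hu.1⟩
  | limit ξ 𝓛 M hlim hsub hne ξm hmono hlt hsup h ih =>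
    obtain ⟨m, hm⟩ := hM.nonempty
    obtain ⟨u, hu⟩ := ih m hm (inter_Ioi_infinite hM m)
    exact ⟨insert m u, hu.1⟩

theorem famAt_inter {𝓛 : Set (Finset ℕ)} {N : Set ℕ} {m : ℕ} (hm : m ∈ N) :
    famAt (𝓛 ∩ FinSubs N) m = famAt 𝓛 m ∩ FinSubs (N ∩ Set.Ioi m) := by
  ext u
  simp only [famAt, FinSubs, Set.mem_inter_iff, Set.mem_setOf_eq]
  constructor
  · rintro ⟨⟨h1, h2⟩, h3⟩
    refine ⟨⟨h1, h3⟩, fun x hx => ?_⟩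
    have hxu : x ∈ u := by exact_mod_cast hx
    exact ⟨h2 (by simp [Finset.mem_insert, hxu]), h3 x hxu⟩
  · rintro ⟨⟨h1, h3⟩, h2⟩
    refine ⟨⟨h1, fun x hx => ?_⟩, h3⟩
    simp only [Finset.coe_insert, Set.mem_insert_iff] at hx
    rcases hx with rfl | hx
    · exact hm
    · exact (h2 hx).1

theorem uniform_restrict {α : Ordinal} {𝓛 : Set (Finset ℕ)} {M : Set ℕ}
    (h : IsUniform α 𝓛 M) : ∀ N, N ⊆ M → N.Infinite →
    IsUniform α (𝓛 ∩ FinSubs N) N := by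
  induction h with
  | zero M =>
    intro N hNM hN
    have : ({(∅ : Finset ℕ)} : Set (Finset ℕ)) ∩ FinSubs N = {(∅ : Finset ℕ)} := by
      apply Set.inter_eq_self_of_subset_left
      intro u hu
      simp only [Set.mem_singleton_iff] at hu
      subst hu
      intro x hx
      simp at hx
    rw [this]
    exact IsUniform.zero N
  | succ ζ 𝓛 M hsub hne h ih =>
    intro N hNM hN
    refine IsUniform.succ ζ _ N (fun u hu => hu.2) (fun hc => hne hc.1) (fun m hm => ?_)
    rw [famAt_inter hm]
    exact ih m (hNM hm) (N ∩ Set.Ioi m)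
      (Set.inter_subset_inter_left _ hNM)
      (inter_Ioi_infinite hN m)
  | limit ξ 𝓛 M hlim hsub hne ξm hmono hlt hsup h ih =>
    intro N hNM hN
    refine IsUniform.limit ξ _ N hlim (fun u hu => hu.2) (fun hc => hne hc.1) ξm
      (fun m hm n hn hmn => hmono m (hNM hm) n (hNM hn) hmn)
      (fun m hm => hlt m (hNM hm))
      (fun β hβ => ?_) (fun m hm => ?_)
    · obtain ⟨m, hm, hβm⟩ := hsup β hβ
      obtain ⟨n, hn, hmn⟩ := hN.exists_gt m
      exact ⟨n, hn, le_of_lt (lt_of_le_of_lt hβm (hmono m hm n (hNM hn) hmn))⟩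
    · rw [famAt_inter hm]
      exact ih m (hNM hm) (N ∩ Set.Ioi m)
        (Set.inter_subset_inter_left _ hNM)
        (inter_Ioi_infinite hN m)

/-- restriction of a uniform subfamily to a smaller infinite tail. -/
theorem uniform_shrink {γ : Ordinal} {𝓠 : Set (Finset ℕ)} {X Y : Set ℕ}
    (h : IsUniform γ 𝓠 X) (hYX : Y ⊆ X) (hY : Y.Infinite) :
    ∃ 𝓠', 𝓠' ⊆ 𝓠 ∧ IsUniform γ 𝓠' Y :=
  ⟨𝓠 ∩ FinSubs Y, Set.inter_subset_left, uniform_restrict h Y hYX hY⟩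

/-! ### Schreier families: unfolding, nonemptiness, spreading -/

variable {c : Ordinal.{0} → ℕ → Ordinal.{0}}

theorem schreierF_zero (c : Ordinal.{0} → ℕ → Ordinal.{0}) :
    SchreierF c 0 = {s : Finset ℕ | ∃ n : ℕ, s = {n}} := by
  unfold SchreierF
  exact Ordinal.limitRecOn_zero _ _ _

theorem schreierF_succ (c : Ordinal.{0} → ℕ → Ordinal.{0}) (a : Ordinal.{0}) :
    SchreierF c (a + 1) = {s | ∃ (n : ℕ) (f : ℕ → Finset ℕ),
        0 < n ∧ (∀ x ∈ f 0, n ≤ x) ∧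
        (∀ i < n, f i ∈ SchreierF c a) ∧
        (∀ i j, i < j → j < n → FinLT (f i) (f j)) ∧
        s = (Finset.range n).biUnion f} := by
  unfold SchreierF
  rw [Ordinal.add_one_eq_succ, Ordinal.limitRecOn_succ]

theorem schreierF_limit (c : Ordinal.{0} → ℕ → Ordinal.{0}) {a : Ordinal.{0}}
    (h : Order.IsSuccLimit a) :
    SchreierF c a = {s | ∃ (n : ℕ) (_ : c a n < a), s ∈ SchreierF c (c a n) ∧ ∀ x ∈ s, n ≤ x} := by
  unfold SchreierF
  rw [Ordinal.limitRecOn_limit _ _ _ _ h]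

theorem schreierF_nonempty (c : Ordinal.{0} → ℕ → Ordinal.{0}) (a : Ordinal.{0}) :
    ∀ F ∈ SchreierF c a, F.Nonempty := by
  induction a using Ordinal.induction with
  | _ a IH =>
    rcases Ordinal.zero_or_succ_or_isSuccLimit a with rfl | ⟨b, rfl⟩ | hlim
    · rw [schreierF_zero]
      rintro F ⟨n, rfl⟩
      exact ⟨n, Finset.mem_singleton_self n⟩
    · rw [← Ordinal.add_one_eq_succ, schreierF_succ]
      rintro F ⟨n, f, hn, hmin, hblk, hFinLT, rfl⟩
      obtain ⟨x, hx⟩ := IH b (by rw [← Ordinal.add_one_eq_succ]; exact Order.lt_succ b) (f 0) (hblk 0 hn)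
      exact ⟨x, Finset.mem_biUnion.mpr ⟨0, Finset.mem_range.mpr hn, hx⟩⟩
    · rw [schreierF_limit c hlim]
      rintro F ⟨n, hltn, hF, hmin⟩
      exact IH _ hltn F hF

theorem schreierF_spread (c : Ordinal.{0} → ℕ → Ordinal.{0}) (a : Ordinal.{0}) :
    SpreadClosed (SchreierF c a) := by
  induction a using Ordinal.induction with
  | _ a IH =>
    rcases Ordinal.zero_or_succ_or_isSuccLimit a with rfl | ⟨b, rfl⟩ | hlim
    · rw [schreierF_zero]
      rintro F ⟨n, rfl⟩ g hg hge
      exact ⟨g n, by simp⟩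
    · rw [← Ordinal.add_one_eq_succ, schreierF_succ]
      rintro F ⟨n, f, hn, hmin, hblk, hFinLT, rfl⟩ g hg hge
      have hsub : ∀ i, i < n → ∀ x ∈ f i, x ∈ (Finset.range n).biUnion f := by
        intro i hi x hx
        exact Finset.mem_biUnion.mpr ⟨i, Finset.mem_range.mpr hi, hx⟩
      refine ⟨n, fun i => (f i).image g, hn, ?_, ?_, ?_, ?_⟩
      · rintro x hx
        obtain ⟨z, hz, rfl⟩ := Finset.mem_image.mp hx
        exact le_trans (hmin z hz) (hge z (hsub 0 hn z hz))
      · intro i hi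
        exact IH b (by rw [← Ordinal.add_one_eq_succ]; exact Order.lt_succ b) (f i) (hblk i hi) g
          (fun x hx y hy => hg x (hsub i hi x hx) y (hsub i hi y hy))
          (fun x hx => hge x (hsub i hi x hx))
      · intro i j hij hjn x hx y hy
        obtain ⟨z, hz, rfl⟩ := Finset.mem_image.mp hx
        obtain ⟨w, hw, rfl⟩ := Finset.mem_image.mp hy
        exact hg z (hsub i (lt_trans hij hjn) z hz) w (hsub j hjn w hw)
          (hFinLT i j hij hjn z hz w hw)
      · ext z
        simp only [Finset.mem_image, Finset.mem_biUnion, Finset.mem_range]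
        constructor
        · rintro ⟨w, ⟨i, hi, hw⟩, rfl⟩
          exact ⟨i, hi, w, hw, rfl⟩
        · rintro ⟨i, hi, w, hw, rfl⟩
          exact ⟨w, ⟨i, hi, hw⟩, rfl⟩
    · rw [schreierF_limit c hlim]
      rintro F ⟨n, hltn, hF, hmin⟩ g hg hge
      refine ⟨n, hltn, IH _ hltn F hF g hg hge, ?_⟩
      intro x hx
      obtain ⟨z, hz, rfl⟩ := Finset.mem_image.mp hx
      exact le_trans (hmin z hz) (hge z hz)

/-! ### Unions of at most `k` blocks -/

def SchreierMul (c : Ordinal.{0} → ℕ → Ordinal.{0}) (a : Ordinal.{0}) (k : ℕ) :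
    Set (Finset ℕ) :=
  {s | ∃ j ≤ k, ∃ f : ℕ → Finset ℕ, (∀ i < j, f i ∈ SchreierF c a) ∧
    (∀ i₁ i₂, i₁ < i₂ → i₂ < j → FinLT (f i₁) (f i₂)) ∧
    s = (Finset.range j).biUnion f}

theorem schreierMul_zero {a : Ordinal.{0}} {s : Finset ℕ} (h : s ∈ SchreierMul c a 0) :
    s = ∅ := by
  obtain ⟨j, hj, f, _, _, rfl⟩ := h
  interval_cases j
  simp

theorem schreierMul_spread (c : Ordinal.{0} → ℕ → Ordinal.{0}) (a : Ordinal.{0}) (k : ℕ) :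
    SpreadClosed (SchreierMul c a k) := by
  rintro F ⟨j, hj, f, hblk, hFinLT, rfl⟩ g hg hge
  have hsub : ∀ i, i < j → ∀ x ∈ f i, x ∈ (Finset.range j).biUnion f := by
    intro i hi x hx
    exact Finset.mem_biUnion.mpr ⟨i, Finset.mem_range.mpr hi, hx⟩
  refine ⟨j, hj, fun i => (f i).image g, ?_, ?_, ?_⟩
  · intro i hi
    exact schreierF_spread c a (f i) (hblk i hi) g
      (fun x hx y hy => hg x (hsub i hi x hx) y (hsub i hi y hy))
      (fun x hx => hge x (hsub i hi x hx))
  · intro i₁ i₂ h12 h2j x hx y hy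
    obtain ⟨z, hz, rfl⟩ := Finset.mem_image.mp hx
    obtain ⟨w, hw, rfl⟩ := Finset.mem_image.mp hy
    exact hg z (hsub i₁ (lt_trans h12 h2j) z hz) w (hsub i₂ h2j w hw)
      (hFinLT i₁ i₂ h12 h2j z hz w hw)
  · ext z
    simp only [Finset.mem_image, Finset.mem_biUnion, Finset.mem_range]
    constructor
    · rintro ⟨w, ⟨i, hi, hw⟩, rfl⟩
      exact ⟨i, hi, w, hw, rfl⟩
    · rintro ⟨i, hi, w, hw, rfl⟩
      exact ⟨w, ⟨i, hi, hw⟩, rfl⟩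

theorem schreierMul_mono {a : Ordinal.{0}} {k k' : ℕ} (h : k ≤ k') :
    SchreierMul c a k ⊆ SchreierMul c a k' := by
  rintro s ⟨j, hj, f, h1, h2, rfl⟩
  exact ⟨j, le_trans hj h, f, h1, h2, rfl⟩

/-- a set which is a union of `n` `SchreierF`-blocks lies in `SchreierMul _ _ n`. -/
theorem schreierF_succ_mem_mul {a : Ordinal.{0}} {s : Finset ℕ}
    (h : s ∈ SchreierF c (a + 1)) : ∃ n : ℕ, 0 < n ∧ s ∈ SchreierMul c a n ∧ ∀ x ∈ s, n ≤ x := by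
  rw [schreierF_succ] at h
  obtain ⟨n, f, hn, hmin, hblk, hFinLT, rfl⟩ := h
  refine ⟨n, hn, ⟨n, le_refl n, f, hblk, hFinLT, rfl⟩, ?_⟩
  intro x hx
  obtain ⟨i, hi, hxi⟩ := Finset.mem_biUnion.mp hx
  rcases Nat.eq_zero_or_pos i with rfl | hipos
  · exact hmin x hxi
  · obtain ⟨z, hz⟩ := schreierF_nonempty c a (f 0) (hblk 0 hn)
    have := hFinLT 0 i hipos (Finset.mem_range.mp hi) z hz x hxi
    have := hmin z hz
    omega

/-- decomposition of a member of `SchreierMul c a (k+1)`. -/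
theorem schreierMul_decomp {a : Ordinal.{0}} {k : ℕ} {s : Finset ℕ}
    (h : s ∈ SchreierMul c a (k + 1)) :
    s ∈ SchreierMul c a k ∨
      ∃ s' B : Finset ℕ, s' ∈ SchreierMul c a k ∧ B ∈ SchreierF c a ∧ FinLT s' B ∧ s = s' ∪ B := by
  obtain ⟨j, hj, f, hblk, hFinLT, rfl⟩ := h
  rcases Nat.lt_or_ge j (k + 1) with hlt | hge
  · left
    exact ⟨j, by omega, f, hblk, hFinLT, rfl⟩
  · right
    have hjk : j = k + 1 := by omega
    subst hjk
    refine ⟨(Finset.range k).biUnion f, f k, ⟨k, le_refl k, f, fun i hi => hblk i (by omega),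
      fun i₁ i₂ h1 h2 => hFinLT i₁ i₂ h1 (by omega), rfl⟩, hblk k (by omega), ?_, ?_⟩
    · intro x hx y hy
      obtain ⟨i, hi, hxi⟩ := Finset.mem_biUnion.mp hx
      exact hFinLT i k (Finset.mem_range.mp hi) (by omega) x hxi y hy
    · rw [Finset.range_add_one, Finset.biUnion_insert, Finset.union_comm]

/-! ### The fusion construction -/

theorem multiShrink {M : Set ℕ} (P : Finset ℕ → Set ℕ → Prop)
    (hP : ∀ t N, N ⊆ M → N.Infinite → ∃ A, A ⊆ N ∧ A.Infinite ∧ P t A)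
    (ts : Finset (Finset ℕ)) :
    ∀ N, N ⊆ M → N.Infinite → ∃ (N' : Set ℕ) (g : Finset ℕ → Set ℕ),
      N' ⊆ N ∧ N'.Infinite ∧ ∀ t ∈ ts, g t ⊆ N ∧ (g t).Infinite ∧ P t (g t) ∧ N' ⊆ g t := by
  induction ts using Finset.induction_on with
  | empty =>
    intro N hNM hN
    exact ⟨N, fun _ => N, le_refl _, hN, by simp⟩
  | @insert t ts _ ih =>
    intro N hNM hN
    obtain ⟨N', g, hN'N, hN', hg⟩ := ih N hNM hN
    obtain ⟨A, hAN', hA, hPA⟩ := hP t N' (hN'N.trans hNM) hN'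
    refine ⟨A, fun t' => if t' = t then A else g t', hAN'.trans hN'N, hA, ?_⟩
    intro t' ht'
    by_cases h : t' = t
    · subst h
      simp only [if_pos rfl]
      exact ⟨hAN'.trans hN'N, hA, hPA, le_refl _⟩
    · simp only [if_neg h]
      have ht'' : t' ∈ ts := by
        rcases Finset.mem_insert.mp ht' with h' | h'
        · exact absurd h' h
        · exact h'
      obtain ⟨h1, h2, h3, h4⟩ := hg t' ht''
      exact ⟨h1, h2, h3, hAN'.trans h4⟩

theorem fusion {M : Set ℕ} (hM : M.Infinite) (P : Finset ℕ → Set ℕ → Prop)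
    (hP : ∀ t N, N ⊆ M → N.Infinite → ∃ A, A ⊆ N ∧ A.Infinite ∧ P t A) :
    ∃ L, L ⊆ M ∧ L.Infinite ∧ ∀ t : Finset ℕ, ↑t ⊆ L → ∃ A : Set ℕ, A.Infinite ∧ P t A ∧
      ∀ x ∈ L, (∀ y ∈ t, y < x) → x ∈ A ∧ cnt L x ≤ cnt A x := by
  classical
  -- good states
  let T := {st : Finset ℕ × Set ℕ × (Finset ℕ → Set ℕ) //
    st.2.1 ⊆ M ∧ st.2.1.Infinite ∧ (∀ x ∈ st.1, ∀ y ∈ st.2.1, x < y) ∧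
    ∀ t, t ⊆ st.1 → P t (st.2.2 t) ∧ st.2.1 ⊆ st.2.2 t}
  -- initial state
  obtain ⟨N₀, g₀, hN₀M, hN₀, hg₀⟩ := multiShrink P hP {∅} M (le_refl _) hM
  obtain ⟨hg₀sub, hg₀inf, hg₀P, hg₀N⟩ := hg₀ ∅ (Finset.mem_singleton_self _)
  obtain ⟨init, hinit⟩ : ∃ i : T, (i.1).1 = ∅ :=
    ⟨⟨(∅, N₀, fun _ => g₀ ∅), hN₀M, hN₀, by simp, by
      intro t ht
      rw [Finset.subset_empty.mp ht]
      exact ⟨hg₀P, hg₀N⟩⟩, rfl⟩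
  -- the step
  have stepEx : ∀ (j : ℕ) (s : T), ∃ (s' : T) (ℓ : ℕ), ℓ ∈ s.1.2.1 ∧ j ≤ cnt s.1.2.1 ℓ ∧
      s'.1.1 = insert ℓ s.1.1 ∧ s'.1.2.1 ⊆ s.1.2.1 ∩ Set.Ioi ℓ := by
    rintro j ⟨⟨pts, N, Amap⟩, hNM, hN, hord, hA⟩
    obtain ⟨ℓ, hℓN, hℓcnt⟩ := cnt_unbounded hN j
    obtain ⟨N', g, hN'sub, hN', hg⟩ := multiShrink P hP (insert ℓ pts).powerset
      (N ∩ Set.Ioi ℓ) ((Set.inter_subset_left).trans hNM) (inter_Ioi_infinite hN ℓ)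
    refine ⟨⟨(insert ℓ pts, N', fun t => if t ∈ (insert ℓ pts).powerset then g t else Amap t),
      ?_, hN', ?_, ?_⟩, ℓ, hℓN, hℓcnt, rfl, hN'sub⟩
    · exact (hN'sub.trans Set.inter_subset_left).trans hNM
    · intro x hx y hy
      have hyN : y ∈ N ∩ Set.Ioi ℓ := hN'sub hy
      rcases Finset.mem_insert.mp hx with rfl | hx
      · exact hyN.2
      · exact hord x hx y hyN.1
    · intro t ht
      have htp : t ∈ (insert ℓ pts).powerset := Finset.mem_powerset.mpr ht
      obtain ⟨h1, h2, h3, h4⟩ := hg t htp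
      simp only [if_pos htp]
      exact ⟨h3, h4⟩
  choose step ℓf hstep using stepEx
  set S : ℕ → T := fun j => Nat.rec init (fun j st => step j st) j with hS
  have hSsucc : ∀ j, S (j + 1) = step j (S j) := fun j => rfl
  set ℓs : ℕ → ℕ := fun j => ℓf j (S j) with hℓs
  set Nn : ℕ → Set ℕ := fun j => (S j).1.2.1 with hNn
  have hmem : ∀ j, ℓs j ∈ Nn j := fun j => (hstep j (S j)).1
  have hcnt : ∀ j, j ≤ cnt (Nn j) (ℓs j) := fun j => (hstep j (S j)).2.1
  have hpts : ∀ j, (S (j + 1)).1.1 = insert (ℓs j) (S j).1.1 := fun j => (hstep j (S j)).2.2.1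
  have hNdec : ∀ j, Nn (j + 1) ⊆ Nn j ∩ Set.Ioi (ℓs j) := fun j => (hstep j (S j)).2.2.2
  have hNmono : ∀ i j, i ≤ j → Nn j ⊆ Nn i := by
    intro i j hij
    induction j with
    | zero => rw [Nat.le_zero.mp hij]
    | succ j ih =>
      rcases Nat.lt_or_ge i (j + 1) with h | h
      · exact ((hNdec j).trans Set.inter_subset_left).trans (ih (by omega))
      · have : i = j + 1 := by omega
        rw [this]
  have hℓmono : StrictMono ℓs := by
    apply strictMono_nat_of_lt_succ
    intro j
    have := (hNdec j) (hmem (j + 1))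
    exact this.2
  have hptsim : ∀ j, (S j).1.1 = (Finset.range j).image ℓs := by
    intro j
    induction j with
    | zero =>
      show (init.1).1 = _
      rw [hinit]
      simp
    | succ j ih =>
      rw [hpts j, ih, Finset.range_add_one, Finset.image_insert]
  set L : Set ℕ := Set.range ℓs with hL
  have hLM : L ⊆ M := by
    rintro x ⟨j, rfl⟩
    exact (S j).2.1 (hmem j)
  have hLinf : L.Infinite := Set.infinite_range_of_injective hℓmono.injective
  have hcntL : ∀ j, cnt L (ℓs j) = j :=
    cnt_enum hℓmono (fun n => ⟨n, rfl⟩) (fun x hx => hx)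
  have hmain : ∀ (j : ℕ) (t : Finset ℕ), t ⊆ (S j).1.1 →
      ∃ A : Set ℕ, A.Infinite ∧ P t A ∧ Nn j ⊆ A := by
    intro j t ht
    obtain ⟨h1, h2⟩ := (S j).2.2.2.2 t ht
    exact ⟨(S j).1.2.2 t, Set.Infinite.mono h2 (S j).2.2.1, h1, h2⟩
  refine ⟨L, hLM, hLinf, ?_⟩
  intro t ht
  rcases Finset.eq_empty_or_nonempty t with rfl | htne
  · obtain ⟨A, hAinf, hAP, hANsub⟩ := hmain 0 ∅ (by simp)
    refine ⟨A, hAinf, hAP, ?_⟩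
    rintro x ⟨m, rfl⟩ _
    have hxm : ℓs m ∈ A := hANsub (hNmono 0 m (by omega) (hmem m))
    refine ⟨hxm, ?_⟩
    rw [hcntL m]
    exact le_trans (hcnt m) (cnt_mono_set (le_trans (hNmono 0 m (by omega)) hANsub) _)
  · -- j := largest index appearing in t
    set j := t.sup' htne (cnt L) with hj
    obtain ⟨y₀, hy₀t, hy₀⟩ := Finset.exists_mem_eq_sup' htne (cnt L)
    have hidx : ∀ x ∈ t, x = ℓs (cnt L x) := by
      intro x hx
      obtain ⟨i, rfl⟩ := ht hx
      rw [hcntL i]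
    have htpts : t ⊆ (S (j + 1)).1.1 := by
      intro x hx
      rw [hptsim (j + 1)]
      have : cnt L x ≤ j := Finset.le_sup' (cnt L) hx
      refine Finset.mem_image.mpr ⟨cnt L x, Finset.mem_range.mpr (by omega), (hidx x hx).symm⟩
    obtain ⟨A, hAinf, hAP, hANsub⟩ := hmain (j + 1) t htpts
    refine ⟨A, hAinf, hAP, ?_⟩
    rintro x ⟨m, rfl⟩ hgt
    have hjm : j < m := by
      have h1 : y₀ < ℓs m := hgt y₀ hy₀t
      have h2 : y₀ = ℓs j := by rw [hidx y₀ hy₀t, ← hy₀, ← hj]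
      rw [h2] at h1
      exact hℓmono.lt_iff_lt.mp h1
    have hsub : Nn m ⊆ A := le_trans (hNmono (j + 1) m (by omega)) hANsub
    refine ⟨hsub (hmem m), ?_⟩
    rw [hcntL m]
    exact le_trans (hcnt m) (cnt_mono_set hsub _)

/-! ### The main inductive statements -/

theorem tailSet_empty (M : Set ℕ) : TailSet M ∅ = M := by
  ext x; simp [TailSet]

theorem tailSet_singleton (M : Set ℕ) (m : ℕ) : TailSet M {m} = M ∩ Set.Ioi m := by
  ext x; simp [TailSet, Set.mem_Ioi]

theorem eq_singleton_of_mapIdx {L : Set ℕ} {s : Finset ℕ} {n : ℕ}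
    (hs : ↑s ⊆ L) (h : mapIdx L s = {n}) : ∃ m ∈ s, s = {m} := by
  have hcard : s.card = 1 := by
    have himg : (mapIdx L s).card = s.card := by
      apply Finset.card_image_of_injOn
      intro x hx y hy hxy
      exact cnt_injOn (hs hx) (hs hy) hxy
    rw [h] at himg
    simpa using himg.symm
  obtain ⟨m, hm⟩ := Finset.card_eq_one.mp hcard
  exact ⟨m, by rw [hm]; exact Finset.mem_singleton_self m, hm⟩

/-- `EProp c a β` : the main inductive statement at level `a`, with residue bound `β`. -/
def EProp (c : Ordinal.{0} → ℕ → Ordinal.{0}) (a β : Ordinal.{0}) : Prop :=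
  ∀ α : Ordinal.{0}, β + Ordinal.omega0 ^ a ≤ α → ∀ M : Set ℕ, M.Infinite →
    ∀ 𝓛 : Set (Finset ℕ), IsUniform α 𝓛 M →
    ∃ L, L ⊆ M ∧ L.Infinite ∧ ∀ s : Finset ℕ, ↑s ⊆ L → mapIdx L s ∈ SchreierF c a →
      ∃ γ, β ≤ γ ∧ ∃ 𝓠, 𝓠 ⊆ res 𝓛 s ∧ IsUniform γ 𝓠 (TailSet L s)

/-- the analogue of `EProp` for unions of at most `k` blocks. -/
def MulProp (c : Ordinal.{0} → ℕ → Ordinal.{0}) (a : Ordinal.{0}) (k : ℕ) (β : Ordinal.{0}) :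
    Prop :=
  ∀ α : Ordinal.{0}, β + Ordinal.omega0 ^ a * k ≤ α → ∀ M : Set ℕ, M.Infinite →
    ∀ 𝓛 : Set (Finset ℕ), IsUniform α 𝓛 M →
    ∃ L, L ⊆ M ∧ L.Infinite ∧ ∀ s : Finset ℕ, ↑s ⊆ L → mapIdx L s ∈ SchreierMul c a k →
      ∃ γ, β ≤ γ ∧ ∃ 𝓠, 𝓠 ⊆ res 𝓛 s ∧ IsUniform γ 𝓠 (TailSet L s)

theorem EProp_zero (c : Ordinal.{0} → ℕ → Ordinal.{0}) (β : Ordinal.{0}) : EProp c 0 β := by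
  intro α hα M hM 𝓛 h𝓛
  rw [Ordinal.opow_zero] at hα
  cases h𝓛 with
  | zero =>
    exfalso
    have h0 : β + 1 = 0 := nonpos_iff_eq_zero.mp hα
    rw [Ordinal.add_one_eq_succ] at h0
    exact Ordinal.succ_ne_zero β h0
  | succ ζ LL MM hsub hne h =>
    have hβζ : β ≤ ζ := by
      rw [Ordinal.add_one_eq_succ, Ordinal.add_one_eq_succ] at hα
      exact (Order.succ_le_succ_iff).mp hα
    refine ⟨M, le_refl _, hM, ?_⟩
    intro s hs hidx
    rw [schreierF_zero] at hidx
    obtain ⟨n, hn⟩ := hidx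
    obtain ⟨m, hms, rfl⟩ := eq_singleton_of_mapIdx hs hn
    have hmM : m ∈ M := hs (by simp)
    refine ⟨ζ, hβζ, famAt 𝓛 m, by rw [res_singleton], ?_⟩
    rw [tailSet_singleton]
    exact h m hmM
  | limit ξ LL MM hlim hsub hne ξm hmono hlt hsup h =>
    have hβξ : β < _ := lt_of_lt_of_le (by rw [Ordinal.add_one_eq_succ]; exact Order.lt_succ β) hα
    obtain ⟨m₀, hm₀, hm₀β⟩ := hsup β hβξ
    refine ⟨M ∩ Set.Ioi m₀, Set.inter_subset_left, inter_Ioi_infinite hM m₀, ?_⟩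
    intro s hs hidx
    rw [schreierF_zero] at hidx
    obtain ⟨n, hn⟩ := hidx
    obtain ⟨m, hms, rfl⟩ := eq_singleton_of_mapIdx hs hn
    have hmM : m ∈ M ∩ Set.Ioi m₀ := hs (by simp)
    refine ⟨ξm m, le_of_lt (lt_of_le_of_lt hm₀β (hmono m₀ hm₀ m hmM.1 hmM.2)), famAt 𝓛 m,
      by rw [res_singleton], ?_⟩
    have htail : TailSet (M ∩ Set.Ioi m₀) {m} = M ∩ Set.Ioi m := by
      rw [tailSet_singleton]
      ext x
      simp only [Set.mem_inter_iff, Set.mem_Ioi]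
      have : m₀ < m := hmM.2
      constructor
      · rintro ⟨⟨h1, h2⟩, h3⟩; exact ⟨h1, h3⟩
      · rintro ⟨h1, h3⟩; exact ⟨⟨h1, by omega⟩, h3⟩
    rw [htail]
    exact h m hmM.1

theorem mapIdx_split {L : Set ℕ} {s F'' B : Finset ℕ} (hsL : ↑s ⊆ L)
    (hsplit : mapIdx L s = F'' ∪ B) :
    mapIdx L (s.filter (fun x => cnt L x ∈ F'')) = F'' ∧
    mapIdx L (s.filter (fun x => cnt L x ∈ B)) = B ∧
    s = s.filter (fun x => cnt L x ∈ F'') ∪ s.filter (fun x => cnt L x ∈ B) := by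
  refine ⟨?_, ?_, ?_⟩
  · apply Finset.Subset.antisymm
    · intro b hb
      obtain ⟨x, hx, rfl⟩ := Finset.mem_image.mp hb
      exact (Finset.mem_filter.mp hx).2
    · intro b hb
      have hbu : b ∈ mapIdx L s := by rw [hsplit]; exact Finset.mem_union_left _ hb
      obtain ⟨x, hx, rfl⟩ := Finset.mem_image.mp hbu
      exact Finset.mem_image.mpr ⟨x, Finset.mem_filter.mpr ⟨hx, hb⟩, rfl⟩
  · apply Finset.Subset.antisymm
    · intro b hb
      obtain ⟨x, hx, rfl⟩ := Finset.mem_image.mp hb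
      exact (Finset.mem_filter.mp hx).2
    · intro b hb
      have hbu : b ∈ mapIdx L s := by rw [hsplit]; exact Finset.mem_union_right _ hb
      obtain ⟨x, hx, rfl⟩ := Finset.mem_image.mp hbu
      exact Finset.mem_image.mpr ⟨x, Finset.mem_filter.mpr ⟨hx, hb⟩, rfl⟩
  · apply Finset.Subset.antisymm
    · intro x hx
      have : cnt L x ∈ mapIdx L s := Finset.mem_image_of_mem _ hx
      rw [hsplit] at this
      rcases Finset.mem_union.mp this with h | h
      · exact Finset.mem_union_left _ (Finset.mem_filter.mpr ⟨hx, h⟩)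
      · exact Finset.mem_union_right _ (Finset.mem_filter.mpr ⟨hx, h⟩)
    · intro x hx
      rcases Finset.mem_union.mp hx with h | h
      · exact (Finset.mem_filter.mp h).1
      · exact (Finset.mem_filter.mp h).1

theorem mulMain {c : Ordinal.{0} → ℕ → Ordinal.{0}} (a : Ordinal.{0})
    (hEa : ∀ β, EProp c a β) : ∀ (k : ℕ) (β : Ordinal.{0}), MulProp c a k β := by
  intro k
  induction k with
  | zero =>
    intro β α hα M hM 𝓛 h𝓛
    refine ⟨M, le_refl _, hM, ?_⟩
    intro s hs hidx
    have hs0 : s = ∅ := mapIdx_eq_empty (schreierMul_zero hidx)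
    subst hs0
    refine ⟨α, ?_, 𝓛, by rw [res_empty], by rw [tailSet_empty]; exact h𝓛⟩
    simpa using hα
  | succ k ih =>
    intro β α hα M hM 𝓛 h𝓛
    have hα1 : (β + Ordinal.omega0 ^ a) + Ordinal.omega0 ^ a * k ≤ α := by
      refine le_trans (le_of_eq ?_) hα
      rw [add_assoc]
      congr 1
      rw [Nat.cast_add, Nat.cast_one]
      have hc1 : ((k : Ordinal) + 1) = 1 + (k : Ordinal) := by
        rw [Ordinal.one_add_natCast]
        exact_mod_cast rfl
      rw [hc1, mul_add, mul_one]
    obtain ⟨L₁, hL₁M, hL₁inf, hprop₁⟩ := ih (β + Ordinal.omega0 ^ a) α hα1 M hM 𝓛 h𝓛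
    set H : Finset ℕ → Prop := fun t => ∃ γ', β + Ordinal.omega0 ^ a ≤ γ' ∧
      ∃ PP, PP ⊆ res 𝓛 t ∧ IsUniform γ' PP (TailSet L₁ t) with hH
    set P : Finset ℕ → Set ℕ → Prop := fun t A => H t → ∀ s' : Finset ℕ, ↑s' ⊆ A →
      mapIdx A s' ∈ SchreierF c a → ∃ γ, β ≤ γ ∧ ∃ 𝓠, 𝓠 ⊆ res 𝓛 (t ∪ s') ∧
        IsUniform γ 𝓠 (TailSet A (t ∪ s')) with hPdef
    have hprov : ∀ t N, N ⊆ L₁ → N.Infinite → ∃ A, A ⊆ N ∧ A.Infinite ∧ P t A := by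
      intro t N hNL₁ hN
      by_cases hHt : H t
      · obtain ⟨γ', hγ', PP, hPPsub, hPP⟩ := hHt
        have hTsub : TailSet N t ⊆ TailSet L₁ t := fun x hx => ⟨hNL₁ hx.1, hx.2⟩
        have hTinf : (TailSet N t).Infinite := tailSet_infinite hN t
        obtain ⟨PPx, hPPxsub, hPPx⟩ := uniform_shrink hPP hTsub hTinf
        obtain ⟨A, hAsub, hAinf, hAprop⟩ := hEa β γ' hγ' (TailSet N t) hTinf PPx hPPx
        refine ⟨A, hAsub.trans (fun x hx => hx.1), hAinf, ?_⟩
        intro _ s' hs'A hs'idx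
        obtain ⟨γ, hγβ, 𝓠, h𝓠sub, h𝓠⟩ := hAprop s' hs'A hs'idx
        have hts' : FinLT t s' := by
          intro y hy x hx
          exact (hAsub (hs'A hx)).2 y hy
        refine ⟨γ, hγβ, 𝓠, ?_, ?_⟩
        · have hres : res (res 𝓛 t) s' = res 𝓛 (t ∪ s') := res_res 𝓛 hts'
          refine h𝓠sub.trans ?_
          rw [← hres]
          exact res_mono (hPPxsub.trans hPPsub) s'
        · have htAeq : TailSet A (t ∪ s') = TailSet A s' := by
            ext x
            simp only [TailSet, Set.mem_setOf_eq, Finset.mem_union]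
            constructor
            · rintro ⟨h1, h2⟩
              exact ⟨h1, fun y hy => h2 y (Or.inr hy)⟩
            · rintro ⟨h1, h2⟩
              refine ⟨h1, fun y hy => ?_⟩
              rcases hy with hy | hy
              · exact (hAsub h1).2 y hy
              · exact h2 y hy
          rw [htAeq]
          exact h𝓠
      · exact ⟨N, le_refl _, hN, fun h => absurd h hHt⟩
    obtain ⟨L, hLL₁, hLinf, hfus⟩ := fusion hL₁inf P hprov
    refine ⟨L, hLL₁.trans hL₁M, hLinf, ?_⟩
    intro s hsL hsidx
    have hsL₁ : ↑s ⊆ L₁ := fun x hx => hLL₁ (hsL hx)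
    have hcntLL₁ : ∀ x ∈ s, cnt L x ≤ cnt L₁ x := fun x _ => cnt_mono_set hLL₁ x
    rcases schreierMul_decomp hsidx with hcase | ⟨F'', B, hF'', hB, hFltB, hsplit⟩
    · -- at most k blocks : use layer 1 directly
      have hidx₁ : mapIdx L₁ s ∈ SchreierMul c a k :=
        spread (schreierMul_spread c a k) hsL hsL₁ hcntLL₁ hcase
      obtain ⟨γ', hγ', PP, hPPsub, hPP⟩ := hprop₁ s hsL₁ hidx₁
      obtain ⟨𝓠, h𝓠sub, h𝓠⟩ := uniform_shrink hPP (fun x hx => ⟨hLL₁ hx.1, hx.2⟩)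
        (tailSet_infinite hLinf s)
      exact ⟨γ', le_trans (le_self_add) hγ', 𝓠, h𝓠sub.trans hPPsub, h𝓠⟩
    · -- k+1 blocks : strip the last one
      obtain ⟨hid1, hid2, hsplit'⟩ := mapIdx_split hsL hsplit
      set s'' := s.filter (fun x => cnt L x ∈ F'') with hs''
      set sB := s.filter (fun x => cnt L x ∈ B) with hsB
      have hs''s : s'' ⊆ s := Finset.filter_subset _ _
      have hsBs : sB ⊆ s := Finset.filter_subset _ _
      have hs''L : ↑s'' ⊆ L := fun x hx => hsL (hs''s hx)
      have hsBL : ↑sB ⊆ L := fun x hx => hsL (hsBs hx)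
      have hlt'' : FinLT s'' sB := by
        intro x hx y hy
        have hx' : cnt L x ∈ F'' := (Finset.mem_filter.mp hx).2
        have hy' : cnt L y ∈ B := (Finset.mem_filter.mp hy).2
        exact (cnt_lt_iff (hs''L hx) (hsBL hy)).mp (hFltB _ hx' _ hy')
      -- H s'' holds
      have hHs'' : H s'' := by
        have : mapIdx L₁ s'' ∈ SchreierMul c a k := by
          apply spread (schreierMul_spread c a k) hs''L (fun x hx => hLL₁ (hs''L hx))
            (fun x _ => cnt_mono_set hLL₁ x)
          rw [hid1]; exact hF''
        obtain ⟨γ', hγ', PP, h1, h2⟩ := hprop₁ s'' (fun x hx => hLL₁ (hs''L hx)) this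
        exact ⟨γ', hγ', PP, h1, h2⟩
      obtain ⟨A, hAinf, hAP, hAsp⟩ := hfus s'' hs''L
      -- sB sits inside A with larger counts
      have hsBA : ∀ x ∈ sB, x ∈ A ∧ cnt L x ≤ cnt A x := by
        intro x hx
        exact hAsp x (hsBL hx) (fun y hy => hlt'' y hy x hx)
      have hsBA' : ↑sB ⊆ A := fun x hx => (hsBA x hx).1
      have hidxB : mapIdx A sB ∈ SchreierF c a := by
        apply spread (schreierF_spread c a) hsBL hsBA' (fun x hx => (hsBA x hx).2)
        rw [hid2]; exact hB
      obtain ⟨γ, hγβ, 𝓠, h𝓠sub, h𝓠⟩ := hAP hHs'' sB hsBA' hidxB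
      rw [← hsplit'] at h𝓠sub h𝓠
      have htsub : TailSet L s ⊆ TailSet A s := by
        intro x hx
        refine ⟨(hAsp x hx.1 (fun y hy => hx.2 y (hs''s hy))).1, hx.2⟩
      obtain ⟨𝓠', h𝓠'sub, h𝓠'⟩ := uniform_shrink h𝓠 htsub (tailSet_infinite hLinf s)
      exact ⟨γ, hγβ, 𝓠', h𝓠'sub.trans h𝓠sub, h𝓠'⟩

/-! ### The main induction -/

theorem EMain (c : Ordinal.{0} → ℕ → Ordinal.{0}) (hc : AdmissibleChoice c) :
    ∀ a : Ordinal.{0}, a.card ≤ Cardinal.aleph0 → ∀ β, EProp c a β := by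
  intro a
  induction a using Ordinal.induction with
  | _ a IH =>
    intro hacard β
    rcases Ordinal.zero_or_succ_or_isSuccLimit a with rfl | ⟨b, rfl⟩ | hlim
    · exact EProp_zero c β
    · -- successor case
      have hb : b < Order.succ b := Order.lt_succ b
      have hbcard : b.card ≤ Cardinal.aleph0 := le_trans (Ordinal.card_le_card hb.le) hacard
      have hMul := mulMain b (fun β' => IH b hb hbcard β')
      intro α hα M hM 𝓛 h𝓛
      set P : Finset ℕ → Set ℕ → Prop := fun t A => ∀ s' : Finset ℕ, ↑s' ⊆ A →
        mapIdx A s' ∈ SchreierMul c b t.card → ∃ γ, β ≤ γ ∧ ∃ 𝓠, 𝓠 ⊆ res 𝓛 s' ∧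
          IsUniform γ 𝓠 (TailSet A s') with hPdef
      have hprov : ∀ t N, N ⊆ M → N.Infinite → ∃ A, A ⊆ N ∧ A.Infinite ∧ P t A := by
        intro t N hNM hN
        have hresN := uniform_restrict h𝓛 N hNM hN
        have hαt : β + Ordinal.omega0 ^ b * (t.card : Ordinal) ≤ α := by
          refine le_trans (add_le_add_right ?_ β) hα
          rw [Ordinal.opow_succ]
          exact mul_le_mul_right (le_of_lt (Ordinal.nat_lt_omega0 t.card)) _
        obtain ⟨A, hAN, hAinf, hAprop⟩ := hMul t.card β α hαt N hN _ hresN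
        refine ⟨A, hAN, hAinf, ?_⟩
        intro s' hs'A hs'idx
        obtain ⟨γ, hγ, 𝓠, h𝓠sub, h𝓠⟩ := hAprop s' hs'A hs'idx
        exact ⟨γ, hγ, 𝓠, h𝓠sub.trans (res_mono Set.inter_subset_left s'), h𝓠⟩
      obtain ⟨L, hLM, hLinf, hfus⟩ := fusion hM P hprov
      refine ⟨L, hLM, hLinf, ?_⟩
      intro s hsL hsidx
      have hsidx' : mapIdx L s ∈ SchreierF c (b + 1) := by
        rw [Ordinal.add_one_eq_succ]; exact hsidx
      obtain ⟨n, hn0, hmul, hmin⟩ := schreierF_succ_mem_mul hsidx'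
      have hsne : s.Nonempty := by
        rcases Finset.eq_empty_or_nonempty s with rfl | h
        · exfalso
          obtain ⟨x, hx⟩ := schreierF_nonempty c _ _ hsidx
          simp [mapIdx] at hx
        · exact h
      -- first `n` elements of `L`
      choose w hwL hwcnt using (fun i => cnt_exists hLinf i)
      set t : Finset ℕ := (Finset.range n).image w with ht
      have htL : ↑t ⊆ L := by
        intro x hx
        simp only [ht, Finset.coe_image, Set.mem_image] at hx
        obtain ⟨i, _, rfl⟩ := hx
        exact hwL i
      have htcard : t.card = n := by
        rw [ht, Finset.card_image_of_injOn, Finset.card_range]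
        intro i _ j _ hij
        rw [← hwcnt i, ← hwcnt j, hij]
      have hts : ∀ y ∈ t, ∀ x ∈ s, y < x := by
        intro y hy x hx
        obtain ⟨i, hi, rfl⟩ := Finset.mem_image.mp hy
        have h1 : cnt L (w i) = i := hwcnt i
        have h2 : n ≤ cnt L x := hmin _ (Finset.mem_image_of_mem _ hx)
        have hi' : i < n := Finset.mem_range.mp hi
        exact (cnt_lt_iff (hwL i) (hsL hx)).mp (by omega)
      obtain ⟨A, hAinf, hAP, hAsp⟩ := hfus t htL
      have hsA : ∀ x ∈ s, x ∈ A ∧ cnt L x ≤ cnt A x :=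
        fun x hx => hAsp x (hsL hx) (fun y hy => hts y hy x hx)
      have hsA' : ↑s ⊆ A := fun x hx => (hsA x hx).1
      have hidxA : mapIdx A s ∈ SchreierMul c b t.card := by
        rw [htcard]
        exact spread (schreierMul_spread c b n) hsL hsA' (fun x hx => (hsA x hx).2) hmul
      obtain ⟨γ, hγ, 𝓠, h𝓠sub, h𝓠⟩ := hAP s hsA' hidxA
      have htsub : TailSet L s ⊆ TailSet A s := by
        intro x hx
        refine ⟨(hAsp x hx.1 (fun y hy => ?_)).1, hx.2⟩
        obtain ⟨z, hz⟩ := hsne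
        exact lt_trans (hts y hy z hz) (hx.2 z hz)
      obtain ⟨𝓠', h𝓠'sub, h𝓠'⟩ := uniform_shrink h𝓠 htsub (tailSet_infinite hLinf s)
      exact ⟨γ, hγ, 𝓠', h𝓠'sub.trans h𝓠sub, h𝓠'⟩
    · -- limit case
      have hcan : ∀ n, c a n < a := (hc a hlim hacard).2.1
      have hcancard : ∀ n, (c a n).card ≤ Cardinal.aleph0 :=
        fun n => le_trans (Ordinal.card_le_card (hcan n).le) hacard
      intro α hα M hM 𝓛 h𝓛
      set P : Finset ℕ → Set ℕ → Prop := fun t A => ∀ s' : Finset ℕ, ↑s' ⊆ A →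
        mapIdx A s' ∈ SchreierF c (c a t.card) → ∃ γ, β ≤ γ ∧ ∃ 𝓠, 𝓠 ⊆ res 𝓛 s' ∧
          IsUniform γ 𝓠 (TailSet A s') with hPdef
      have hprov : ∀ t N, N ⊆ M → N.Infinite → ∃ A, A ⊆ N ∧ A.Infinite ∧ P t A := by
        intro t N hNM hN
        have hresN := uniform_restrict h𝓛 N hNM hN
        have hαt : β + Ordinal.omega0 ^ (c a t.card) ≤ α := by
          refine le_trans (add_le_add_right ?_ β) hα
          exact Ordinal.opow_le_opow_right Ordinal.omega0_pos (hcan t.card).le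
        obtain ⟨A, hAN, hAinf, hAprop⟩ :=
          IH (c a t.card) (hcan t.card) (hcancard t.card) β α hαt N hN _ hresN
        refine ⟨A, hAN, hAinf, ?_⟩
        intro s' hs'A hs'idx
        obtain ⟨γ, hγ, 𝓠, h𝓠sub, h𝓠⟩ := hAprop s' hs'A hs'idx
        exact ⟨γ, hγ, 𝓠, h𝓠sub.trans (res_mono Set.inter_subset_left s'), h𝓠⟩
      obtain ⟨L, hLM, hLinf, hfus⟩ := fusion hM P hprov
      refine ⟨L, hLM, hLinf, ?_⟩
      intro s hsL hsidx
      rw [schreierF_limit c hlim] at hsidx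
      obtain ⟨n, hltn, hFn, hmin⟩ := hsidx
      have hsne : s.Nonempty := by
        rcases Finset.eq_empty_or_nonempty s with rfl | h
        · exfalso
          obtain ⟨x, hx⟩ := schreierF_nonempty c _ _ hFn
          simp [mapIdx] at hx
        · exact h
      choose w hwL hwcnt using (fun i => cnt_exists hLinf i)
      set t : Finset ℕ := (Finset.range n).image w with ht
      have htL : ↑t ⊆ L := by
        intro x hx
        simp only [ht, Finset.coe_image, Set.mem_image] at hx
        obtain ⟨i, _, rfl⟩ := hx
        exact hwL i
      have htcard : t.card = n := by
        rw [ht, Finset.card_image_of_injOn, Finset.card_range]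
        intro i _ j _ hij
        rw [← hwcnt i, ← hwcnt j, hij]
      have hts : ∀ y ∈ t, ∀ x ∈ s, y < x := by
        intro y hy x hx
        obtain ⟨i, hi, rfl⟩ := Finset.mem_image.mp hy
        have h1 : cnt L (w i) = i := hwcnt i
        have h2 : n ≤ cnt L x := hmin _ (Finset.mem_image_of_mem _ hx)
        have hi' : i < n := Finset.mem_range.mp hi
        exact (cnt_lt_iff (hwL i) (hsL hx)).mp (by omega)
      obtain ⟨A, hAinf, hAP, hAsp⟩ := hfus t htL
      have hsA : ∀ x ∈ s, x ∈ A ∧ cnt L x ≤ cnt A x :=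
        fun x hx => hAsp x (hsL hx) (fun y hy => hts y hy x hx)
      have hsA' : ↑s ⊆ A := fun x hx => (hsA x hx).1
      have hidxA : mapIdx A s ∈ SchreierF c (c a t.card) := by
        rw [htcard]
        exact spread (schreierF_spread c (c a n)) hsL hsA' (fun x hx => (hsA x hx).2) hFn
      obtain ⟨γ, hγ, 𝓠, h𝓠sub, h𝓠⟩ := hAP s hsA' hidxA
      have htsub : TailSet L s ⊆ TailSet A s := by
        intro x hx
        refine ⟨(hAsp x hx.1 (fun y hy => ?_)).1, hx.2⟩
        obtain ⟨z, hz⟩ := hsne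
        exact lt_trans (hts y hy z hz) (hx.2 z hz)
      obtain ⟨𝓠', h𝓠'sub, h𝓠'⟩ := uniform_shrink h𝓠 htsub (tailSet_infinite hLinf s)
      exact ⟨γ, hγ, 𝓠', h𝓠'sub.trans h𝓠sub, h𝓠'⟩

end SchreierAux

open SchreierAux in
/-- **Proposition 3.1.** If `ℒ` is an `ω^ξ`-uniform family on the infinite set
`M`, then there is an infinite `L ⊆ M` with `ℱ_ξ(L) ⊆ ℒ*`, where `ℱ_ξ(L)` is
the image of `ℱ_ξ` under the increasing enumeration `e` of `L`. -/
theorem schreier_in_star (c : Ordinal.{0} → ℕ → Ordinal.{0})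
    (hc : AdmissibleChoice c)
    (ξ : Ordinal.{0}) (hξ : ξ.card ≤ Cardinal.aleph0)
    (M : Set ℕ) (hM : M.Infinite)
    (𝓛 : Set (Finset ℕ)) (h𝓛 : IsUniform (Ordinal.omega0 ^ ξ) 𝓛 M) :
    ∃ L : Set ℕ, L ⊆ M ∧ L.Infinite ∧
      ∀ e : ℕ → ℕ, StrictMono e → Set.range e = L →
        ∀ F ∈ SchreierF c ξ, F.image e ∈ famStar 𝓛 := by
  obtain ⟨L, hLM, hLinf, hL⟩ := EMain c hc ξ hξ 0 (Ordinal.omega0 ^ ξ)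
    (by rw [zero_add]) M hM 𝓛 h𝓛
  refine ⟨L, hLM, hLinf, ?_⟩
  intro e he hrange F hF
  have hmemL : ∀ n, e n ∈ L := fun n => by rw [← hrange]; exact ⟨n, rfl⟩
  have hFL : ↑(F.image e) ⊆ L := by
    intro x hx
    simp only [Finset.coe_image, Set.mem_image] at hx
    obtain ⟨n, _, rfl⟩ := hx
    exact hmemL n
  have hcntL : ∀ n, cnt L (e n) = n :=
    cnt_enum he hmemL (fun x hx => by rw [← hrange] at hx; exact hx)
  have hmap : mapIdx L (F.image e) = F := by
    unfold mapIdx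
    rw [Finset.image_image, show cnt L ∘ e = id from funext hcntL, Finset.image_id]
  obtain ⟨γ, _, 𝓠, h𝓠sub, h𝓠⟩ := hL (F.image e) hFL (by rw [hmap]; exact hF)
  obtain ⟨u, hu⟩ := uniform_nonempty h𝓠 (tailSet_infinite hLinf _)
  exact mem_famStar_of_res (h𝓠sub hu)
end
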